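/- arXiv:2212.04383 — 9 statements merged into one kernel-verified Lean document; each statement's English description precedes it below -/
import Mathlib

section
/- Generalized Faulhaber formula (first form): for all integers m ≥ 1 and n ≥ 0, Σ_{j=0}^{m−1} P_{f,n}(x+j) = (C_{f,n+1}(x+m) − C_{f,n+1}(x))/(n+1). -/
/-- The Appell polynomials associated to a coefficient sequence `c`. -/
noncomputable def appell (c : ℕ → ℝ) (n : ℕ) (x : ℝ) : ℝ :=
  ∑ k ∈ Finset.range (n + 1), (n.choose k : ℝ) * c k * x ^ (n - k)

lemma pow_aux (N : ℕ) (y : ℝ) :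
    (y + 1) ^ N - y ^ N
      = ∑ t ∈ Finset.range N, (N.choose (t + 1) : ℝ) * y ^ (N - 1 - t) := by
  have h : (y + 1) ^ N
      = ∑ s ∈ Finset.range (N + 1), (N.choose s : ℝ) * y ^ (N - s) := by
    rw [add_comm, add_pow]
    refine Finset.sum_congr rfl fun s _ => by ring
  rw [h, Finset.sum_range_succ']
  have h0 : (N.choose 0 : ℝ) * y ^ (N - 0) = y ^ N := by simp
  rw [h0]
  have hcg : ∀ t ∈ Finset.range N, (N.choose (t+1) : ℝ) * y ^ (N - (t+1))
      = (N.choose (t+1) : ℝ) * y ^ (N - 1 - t) := fun t ht => by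
    rw [show N - (t+1) = N - 1 - t from by omega]
  rw [Finset.sum_congr rfl hcg]
  ring

set_option maxRecDepth 10000 in
lemma key (c P : ℕ → ℝ)
    (hP : ∀ n : ℕ, ((n : ℝ) + 1) * P n
      = ∑ k ∈ Finset.range (n + 1), ((n + 1).choose k : ℝ) * c k)
    (n : ℕ) (y : ℝ) :
    ((n : ℝ) + 1) * appell P n y
      = appell c (n + 1) (y + 1) - appell c (n + 1) y := by
  -- LHS transformation
  have lhs_eq : ((n : ℝ) + 1) * appell P n y
      = ∑ k ∈ Finset.range (n + 1), ((n+1).choose k : ℝ) * c k *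
          ∑ t ∈ Finset.range (n + 1 - k),
            ((n + 1 - k).choose (t + 1) : ℝ) * y ^ (n - k - t) := by
    unfold appell
    rw [Finset.mul_sum]
    have step1 : ∀ j ∈ Finset.range (n + 1),
        ((n : ℝ) + 1) * ((n.choose j : ℝ) * P j * y ^ (n - j))
          = ∑ k ∈ Finset.range (j + 1),
              ((n+1).choose (j+1) : ℝ) * ((j+1).choose k : ℝ) * c k * y ^ (n - j) := by
      intro j _
      have hnat : (n + 1) * n.choose j = (n + 1).choose (j + 1) * (j + 1) :=
        Nat.add_one_mul_choose_eq n j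
      have hcast : ((n : ℝ) + 1) * (n.choose j : ℝ)
          = ((n+1).choose (j+1) : ℝ) * ((j : ℝ) + 1) := by
        exact_mod_cast congrArg (Nat.cast (R := ℝ)) hnat
      calc ((n : ℝ) + 1) * ((n.choose j : ℝ) * P j * y ^ (n - j))
          = (((n : ℝ) + 1) * (n.choose j : ℝ)) * P j * y ^ (n - j) := by ring
        _ = ((n+1).choose (j+1) : ℝ) * (((j : ℝ) + 1) * P j) * y ^ (n - j) := by
            rw [hcast]; ring
        _ = ((n+1).choose (j+1) : ℝ) *
              (∑ k ∈ Finset.range (j + 1), ((j + 1).choose k : ℝ) * c k) * y ^ (n - j) := by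
            rw [hP j]
        _ = ∑ k ∈ Finset.range (j + 1),
              ((n+1).choose (j+1) : ℝ) * ((j+1).choose k : ℝ) * c k * y ^ (n - j) := by
            rw [Finset.mul_sum, Finset.sum_mul]
            refine Finset.sum_congr rfl fun k _ => by ring
    rw [Finset.sum_congr rfl step1]
    -- swap the triangular sum
    have swap : ∑ j ∈ Finset.range (n + 1), ∑ k ∈ Finset.range (j + 1),
          ((n+1).choose (j+1) : ℝ) * ((j+1).choose k : ℝ) * c k * y ^ (n - j)
        = ∑ k ∈ Finset.range (n + 1), ∑ j ∈ Finset.Ico k (n + 1),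
          ((n+1).choose (j+1) : ℝ) * ((j+1).choose k : ℝ) * c k * y ^ (n - j) := by
      simpa using (Finset.sum_Ico_Ico_comm 0 (n + 1)
        (fun k j => ((n+1).choose (j+1) : ℝ) * ((j+1).choose k : ℝ) * c k * y ^ (n - j))).symm
    rw [swap]
    refine Finset.sum_congr rfl fun k hk => ?_
    rw [Finset.mem_range] at hk
    rw [Finset.sum_Ico_eq_sum_range]
    rw [Finset.mul_sum]
    refine Finset.sum_congr rfl fun t ht => ?_
    rw [Finset.mem_range] at ht
    have hjk : k ≤ k + t + 1 := by omega
    have hjn : k + t + 1 ≤ n + 1 := by omega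
    have hcm : (n+1).choose (k + t + 1) * (k + t + 1).choose k
        = (n+1).choose k * (n + 1 - k).choose (k + t + 1 - k) :=
      Nat.choose_mul hjk
    have h1 : k + t + 1 - k = t + 1 := by omega
    rw [h1] at hcm
    have hcast : ((n+1).choose (k + t + 1) : ℝ) * ((k + t + 1).choose k : ℝ)
        = ((n+1).choose k : ℝ) * ((n + 1 - k).choose (t + 1) : ℝ) := by
      exact_mod_cast congrArg (Nat.cast (R := ℝ)) hcm
    have h2 : n - (k + t) = n - k - t := by omega
    calc ((n+1).choose (k + t + 1) : ℝ) * ((k + t + 1).choose k : ℝ) * c k * y ^ (n - (k + t))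
        = (((n+1).choose (k + t + 1) : ℝ) * ((k + t + 1).choose k : ℝ)) * c k
            * y ^ (n - k - t) := by rw [h2]
      _ = ((n+1).choose k : ℝ) * c k * (((n + 1 - k).choose (t + 1) : ℝ) * y ^ (n - k - t)) := by
          rw [hcast]; ring
  rw [lhs_eq]
  -- RHS transformation
  unfold appell
  rw [← Finset.sum_sub_distrib]
  rw [Finset.sum_range_succ (fun k => ((n+1).choose k : ℝ) * c k * (y+1) ^ (n+1-k)
      - ((n+1).choose k : ℝ) * c k * y ^ (n+1-k))]
  simp only [Nat.sub_self, pow_zero]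
  rw [show ((n+1).choose (n+1) : ℝ) * c (n+1) * 1 - ((n+1).choose (n+1) : ℝ) * c (n+1) * 1
      = 0 by ring, add_zero]
  refine Finset.sum_congr rfl fun k hk => ?_
  rw [Finset.mem_range] at hk
  have hd : ((n+1).choose k : ℝ) * c k * (y+1) ^ (n+1-k)
      - ((n+1).choose k : ℝ) * c k * y ^ (n+1-k)
      = ((n+1).choose k : ℝ) * c k * ((y+1) ^ (n+1-k) - y ^ (n+1-k)) := by ring
  rw [hd, pow_aux (n+1-k) y]
  have h3 : n + 1 - k - 1 = n - k := by omega
  rw [h3]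

/-- generalized Faulhaber formula, first form:
`∑_{j=0}^{m−1} P_{f,n}(x+j) = (C_{f,n+1}(x+m) − C_{f,n+1}(x))/(n+1)`. -/
theorem statement10 (c P : ℕ → ℝ)
    (hP : ∀ n : ℕ, ((n : ℝ) + 1) * P n
      = ∑ k ∈ Finset.range (n + 1), ((n + 1).choose k : ℝ) * c k)
    (m : ℕ) (hm : 1 ≤ m) (n : ℕ) (x : ℝ) :
    ∑ j ∈ Finset.range m, appell P n (x + j)
      = (appell c (n + 1) (x + m) - appell c (n + 1) x) / ((n : ℝ) + 1) := by
  have hne : ((n : ℝ) + 1) ≠ 0 := by positivity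
  have step : ∀ j : ℕ, appell P n (x + j)
      = (appell c (n+1) (x + (j+1 : ℕ)) - appell c (n+1) (x + j)) / ((n : ℝ) + 1) := by
    intro j
    have := key c P hP n (x + j)
    have hc : x + ((j+1 : ℕ) : ℝ) = (x + j) + 1 := by push_cast; ring
    rw [hc, ← this]
    field_simp
  simp only [step]
  rw [← Finset.sum_div]
  rw [Finset.sum_range_sub (fun j => appell c (n+1) (x + j))]
  norm_num
end

section
/- Generalized Faulhaber formula (second form): for all integers m ≥ 1 and n ≥ 0, Σ_{j=0}^{m−1} P_{f,n}(x+j) = (1/(n+1)) Σ_{k=0}^{n} C(n+1,k) · C_{f,k}(x) · m^{n+1−k}. -/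
/-- Binomial translation formula for Appell polynomials. -/
lemma appell_add (c : ℕ → ℝ) (n : ℕ) (x y : ℝ) :
    appell c n (x + y)
      = ∑ k ∈ Finset.range (n + 1), (n.choose k : ℝ) * appell c k x * y ^ (n - k) := by
  unfold appell
  simp_rw [add_pow, Finset.mul_sum, Finset.sum_mul]
  rw [Finset.sum_sigma', Finset.sum_sigma']
  refine Finset.sum_nbij' (fun p => ⟨p.1 + p.2, p.1⟩) (fun p => ⟨p.2, p.1 - p.2⟩)
    ?_ ?_ ?_ ?_ ?_
  · rintro ⟨k, i⟩ h
    simp only [Finset.mem_sigma, Finset.mem_range] at h ⊢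
    omega
  · rintro ⟨j, i⟩ h
    simp only [Finset.mem_sigma, Finset.mem_range] at h ⊢
    omega
  · rintro ⟨k, i⟩ h; simp
  · rintro ⟨j, i⟩ h
    simp only [Finset.mem_sigma, Finset.mem_range] at h
    dsimp only
    simp only [Sigma.mk.inj_iff, heq_eq_eq]
    exact ⟨by omega, trivial⟩
  · rintro ⟨k, i⟩ h
    simp only [Finset.mem_sigma, Finset.mem_range] at h
    have hcc : ((n.choose (k + i)) * ((k + i).choose k) : ℕ)
        = (n.choose k) * ((n - k).choose i) := by
      rw [Nat.choose_mul (by omega)]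
      congr 2 <;> omega
    have hcast : ((n.choose (k + i)) : ℝ) * (((k + i).choose k) : ℝ)
        = ((n.choose k) : ℝ) * (((n - k).choose i) : ℝ) := by exact_mod_cast hcc
    have he1 : k + i - k = i := by omega
    have he2 : n - (k + i) = n - k - i := by omega
    dsimp only
    rw [he1, he2]
    linear_combination (-(c k * x ^ i * y ^ (n - k - i))) * hcast

lemma appell_diff (c P : ℕ → ℝ)
    (hP : ∀ n : ℕ, ((n : ℝ) + 1) * P n
      = ∑ k ∈ Finset.range (n + 1), ((n + 1).choose k : ℝ) * c k)
    (n : ℕ) (x : ℝ) :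
    ((n : ℝ) + 1) * appell P n x
      = appell c (n + 1) (x + 1) - appell c (n + 1) x := by
  have h1 : appell c (n + 1) (x + 1) - appell c (n + 1) x
      = ∑ k ∈ Finset.range (n + 1), ((n + 1).choose k : ℝ) * appell c k x := by
    rw [appell_add c (n + 1) x 1, Finset.sum_range_succ]
    simp
  rw [h1]
  unfold appell
  rw [Finset.mul_sum]
  have hterm : ∀ j ∈ Finset.range (n + 1),
      ((n : ℝ) + 1) * ((n.choose j : ℝ) * P j * x ^ (n - j))
        = ((n + 1).choose (j + 1) : ℝ) *
            (∑ i ∈ Finset.range (j + 1), ((j + 1).choose i : ℝ) * c i) * x ^ (n - j) := by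
    intro j _
    have hmc : ((n : ℝ) + 1) * (n.choose j : ℝ)
        = ((n + 1).choose (j + 1) : ℝ) * ((j : ℝ) + 1) := by
      have h := Nat.add_one_mul_choose_eq n j
      exact_mod_cast congrArg (Nat.cast (R := ℝ)) h
    calc ((n : ℝ) + 1) * ((n.choose j : ℝ) * P j * x ^ (n - j))
        = (((n : ℝ) + 1) * (n.choose j : ℝ)) * P j * x ^ (n - j) := by ring
      _ = ((n + 1).choose (j + 1) : ℝ) * (((j : ℝ) + 1) * P j) * x ^ (n - j) := by
          rw [hmc]; ring
      _ = _ := by rw [hP j]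
  rw [Finset.sum_congr rfl hterm]
  simp_rw [Finset.mul_sum, Finset.sum_mul]
  rw [Finset.sum_sigma', Finset.sum_sigma']
  refine Finset.sum_nbij' (fun p => ⟨n - p.1 + p.2, p.2⟩) (fun p => ⟨n - p.1 + p.2, p.2⟩)
    ?_ ?_ ?_ ?_ ?_
  · rintro ⟨j, i⟩ h
    simp only [Finset.mem_sigma, Finset.mem_range] at h ⊢
    omega
  · rintro ⟨k, i⟩ h
    simp only [Finset.mem_sigma, Finset.mem_range] at h ⊢
    omega
  · rintro ⟨j, i⟩ h
    simp only [Finset.mem_sigma, Finset.mem_range] at h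
    dsimp only
    simp only [Sigma.mk.inj_iff, heq_eq_eq]
    exact ⟨by omega, trivial⟩
  · rintro ⟨k, i⟩ h
    simp only [Finset.mem_sigma, Finset.mem_range] at h
    dsimp only
    simp only [Sigma.mk.inj_iff, heq_eq_eq]
    exact ⟨by omega, trivial⟩
  · rintro ⟨j, i⟩ h
    simp only [Finset.mem_sigma, Finset.mem_range] at h
    have hcc : ((n + 1).choose (j + 1) * (j + 1).choose i : ℕ)
        = ((n + 1).choose (n - j + i) * (n - j + i).choose i : ℕ) := by
      rw [Nat.choose_mul (by omega), Nat.choose_mul (by omega)]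
      congr 1
      rw [show n - j + i - i = n - j from by omega,
        ← Nat.choose_symm (show n - j ≤ n + 1 - i from by omega)]
      congr 1
      omega
    have hcast : ((n + 1).choose (j + 1) : ℝ) * ((j + 1).choose i : ℝ)
        = ((n + 1).choose (n - j + i) : ℝ) * ((n - j + i).choose i : ℝ) := by
      exact_mod_cast hcc
    have he : n - j + i - i = n - j := by omega
    dsimp only
    rw [he]
    linear_combination (c i * x ^ (n - j)) * hcast

/-- generalized Faulhaber formula, second form:
`∑_{j=0}^{m−1} P_{f,n}(x+j) = (1/(n+1)) ∑_{k=0}^n (n+1 choose k) C_{f,k}(x) m^{n+1−k}`. -/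
theorem statement11 (c P : ℕ → ℝ)
    (hP : ∀ n : ℕ, ((n : ℝ) + 1) * P n
      = ∑ k ∈ Finset.range (n + 1), ((n + 1).choose k : ℝ) * c k)
    (m : ℕ) (hm : 1 ≤ m) (n : ℕ) (x : ℝ) :
    ∑ j ∈ Finset.range m, appell P n (x + j)
      = (1 / ((n : ℝ) + 1)) *
          ∑ k ∈ Finset.range (n + 1),
            ((n + 1).choose k : ℝ) * appell c k x * (m : ℝ) ^ (n + 1 - k) := by
  have hne : ((n : ℝ) + 1) ≠ 0 := by positivity
  have key : ((n : ℝ) + 1) * ∑ j ∈ Finset.range m, appell P n (x + j)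
      = ∑ k ∈ Finset.range (n + 1),
          ((n + 1).choose k : ℝ) * appell c k x * (m : ℝ) ^ (n + 1 - k) := by
    rw [Finset.mul_sum]
    have h1 : ∀ j ∈ Finset.range m,
        ((n : ℝ) + 1) * appell P n (x + j)
          = appell c (n + 1) (x + ((j + 1 : ℕ) : ℝ)) - appell c (n + 1) (x + j) := by
      intro j _
      rw [appell_diff c P hP n (x + j)]
      push_cast
      ring_nf
    rw [Finset.sum_congr rfl h1,
      Finset.sum_range_sub (fun j => appell c (n + 1) (x + (j : ℝ)))]
    rw [appell_add c (n + 1) x m, Finset.sum_range_succ]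
    simp
  rw [← key, one_div, inv_mul_cancel_left₀ hne]
end

section
/- Generalized Faulhaber formula at x = 0: for all integers m ≥ 1 and n ≥ 0, Σ_{j=0}^{m−1} P_{f,n}(j) = (1/(n+1)) Σ_{k=0}^{n} C(n+1,k) · C_{f,k} · m^{n+1−k}. -/
lemma pow_succ_sub (N : ℕ) (x : ℝ) :
    (x + 1) ^ N - x ^ N = ∑ j ∈ Finset.range N, (N.choose j : ℝ) * x ^ j := by
  have h := add_pow x 1 N
  simp only [one_pow, mul_one] at h
  rw [h, Finset.sum_range_succ, Nat.choose_self]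
  simp only [Nat.cast_one, mul_one, add_sub_cancel_right]
  exact Finset.sum_congr rfl fun j _ => mul_comm _ _

lemma triangle_swap (n : ℕ) (g : ℕ → ℕ → ℝ) :
    ∑ k ∈ Finset.range (n+1), ∑ j ∈ Finset.range (n+1-k), g k j
      = ∑ j ∈ Finset.range (n+1), ∑ k ∈ Finset.range (n+1-j), g k j := by
  rw [Finset.sum_sigma', Finset.sum_sigma']
  apply Finset.sum_nbij' (fun p => ⟨p.2, p.1⟩) (fun p => ⟨p.2, p.1⟩) <;>
    simp only [Finset.mem_sigma, Finset.mem_range] <;> intros <;> first | omega | trivial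

lemma appell_step (c P : ℕ → ℝ)
    (hP : ∀ n : ℕ, ((n : ℝ) + 1) * P n
      = ∑ k ∈ Finset.range (n + 1), ((n + 1).choose k : ℝ) * c k)
    (n : ℕ) (x : ℝ) :
    appell c (n+1) (x+1) - appell c (n+1) x = ((n : ℝ) + 1) * appell P n x := by
  unfold appell
  rw [← Finset.sum_sub_distrib]
  have h1 : ∀ k ∈ Finset.range (n+2),
      ((n+1).choose k : ℝ) * c k * (x+1) ^ (n+1-k) - ((n+1).choose k : ℝ) * c k * x ^ (n+1-k)
        = ∑ j ∈ Finset.range (n+1-k),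
            ((n+1).choose k : ℝ) * c k * (((n+1-k).choose j : ℝ) * x ^ j) := by
    intro k hk
    rw [← Finset.mul_sum, ← pow_succ_sub]
    ring
  rw [Finset.sum_congr rfl h1, Finset.sum_range_succ]
  simp only [Nat.add_sub_cancel_left, Nat.sub_self, Finset.range_zero, Finset.sum_empty, add_zero]
  rw [triangle_swap n (fun k j => ((n+1).choose k : ℝ) * c k * (((n+1-k).choose j : ℝ) * x ^ j))]
  rw [Finset.mul_sum, ← Finset.sum_range_reflect
    (fun k => ((n : ℝ) + 1) * ((n.choose k : ℝ) * P k * x ^ (n - k))) (n+1)]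
  refine Finset.sum_congr rfl fun j hj => ?_
  rw [Finset.mem_range] at hj
  have hjn : j ≤ n := by omega
  have hch : ∀ k ∈ Finset.range (n+1-j),
      ((n+1).choose k : ℝ) * c k * (((n+1-k).choose j : ℝ) * x ^ j)
        = ((n+1).choose j : ℝ) * (((n+1-j).choose k : ℝ) * c k) * x ^ j := by
    intro k hk
    rw [Finset.mem_range] at hk
    have h := Nat.choose_mul (n := n+1) (show k ≤ n+1-j by omega)
    rw [Nat.choose_symm (show j ≤ n+1 by omega)] at h
    rw [show n+1-j-k = (n+1-k)-j by omega] at h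
    rw [Nat.choose_symm (show j ≤ n+1-k by omega)] at h
    have hcast : ((n+1).choose j : ℝ) * ((n+1-j).choose k : ℝ)
        = ((n+1).choose k : ℝ) * ((n+1-k).choose j : ℝ) := by exact_mod_cast congrArg Nat.cast h
    linear_combination (-(c k * x ^ j)) * hcast
  rw [Finset.sum_congr rfl hch, ← Finset.sum_mul, ← Finset.mul_sum]
  rw [show n + 1 - j = (n-j) + 1 from by omega, ← hP (n-j)]
  rw [show n + 1 - 1 - j = n - j from by omega, show n - (n-j) = j from by omega]
  have hnat : (n+1).choose j * ((n-j)+1) = (n+1) * (n.choose (n-j)) := by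
    rw [Nat.choose_symm hjn, show (n-j)+1 = n+1-j from by omega, ← Nat.choose_mul_succ_eq]
    ring
  have hcast : ((n+1).choose j : ℝ) * ((n-j : ℕ) + 1) = ((n:ℝ)+1) * (n.choose (n-j) : ℝ) := by
    exact_mod_cast congrArg Nat.cast hnat
  linear_combination (P (n-j) * x ^ j) * hcast

/-- generalized Faulhaber formula at `x = 0`:
`∑_{j=0}^{m−1} P_{f,n}(j) = (1/(n+1)) ∑_{k=0}^n (n+1 choose k) C_{f,k} m^{n+1−k}`. -/
theorem statement12 (c P : ℕ → ℝ)
    (hP : ∀ n : ℕ, ((n : ℝ) + 1) * P n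
      = ∑ k ∈ Finset.range (n + 1), ((n + 1).choose k : ℝ) * c k)
    (m : ℕ) (hm : 1 ≤ m) (n : ℕ) :
    ∑ j ∈ Finset.range m, appell P n (j : ℝ)
      = (1 / ((n : ℝ) + 1)) *
          ∑ k ∈ Finset.range (n + 1),
            ((n + 1).choose k : ℝ) * c k * (m : ℝ) ^ (n + 1 - k) := by
  have hpos : ((n : ℝ) + 1) ≠ 0 := by positivity
  have h0 : appell c (n+1) (0:ℝ) = c (n+1) := by
    unfold appell
    rw [Finset.sum_range_succ, Finset.sum_eq_zero (fun k hk => by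
      rw [Finset.mem_range] at hk
      rw [zero_pow (show n+1-k ≠ 0 by omega), mul_zero])]
    simp
  have hmv : appell c (n+1) ((m:ℕ):ℝ) - appell c (n+1) ((0:ℕ):ℝ)
      = ∑ k ∈ Finset.range (n + 1), ((n + 1).choose k : ℝ) * c k * (m : ℝ) ^ (n + 1 - k) := by
    rw [Nat.cast_zero, h0]
    unfold appell
    rw [Finset.sum_range_succ]
    simp
  have key : ((n:ℝ)+1) * ∑ j ∈ Finset.range m, appell P n (j : ℝ)
      = ∑ k ∈ Finset.range (n + 1), ((n + 1).choose k : ℝ) * c k * (m : ℝ) ^ (n + 1 - k) := by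
    rw [Finset.mul_sum, ← hmv,
      ← Finset.sum_range_sub (fun j => appell c (n+1) ((j:ℕ):ℝ)) m]
    refine Finset.sum_congr rfl fun j _ => ?_
    rw [show ((j+1 : ℕ) : ℝ) = (j:ℝ) + 1 by push_cast; ring]
    exact (appell_step c P hP n (j:ℝ)).symm
  rw [← key]
  field_simp
end

section
/- Multiplication formula for C-polynomials: for all integers n ≥ 0 and m ≥ 1, Σ_{k=0}^{m−1} C_{f,n}((x+k)/m) = m^{1−n} · C_{g,n}(x), where g(t) = ((e^{mt}−1)/(m(e^t−1))) f(mt). -/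
lemma myAux (A : ℕ → ℝ) (S : ℝ → ℝ) (r : ℝ) (hr : 0 < r)
    (h : ∀ t : ℝ, |t| < r → HasSum (fun n => A n * t ^ n) (S t)) :
    HasFPowerSeriesAt S (fun n => A n • ContinuousMultilinearMap.mkPiAlgebraFin ℝ n ℝ) 0 := by
  set p : FormalMultilinearSeries ℝ ℝ ℝ :=
    fun n => A n • ContinuousMultilinearMap.mkPiAlgebraFin ℝ n ℝ with hp
  have hr2 : (0:ℝ) < r / 2 := by linarith
  have hcoe : ((Real.toNNReal (r/2)) : ℝ) = r/2 := Real.coe_toNNReal _ hr2.le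
  refine ⟨((Real.toNNReal (r/2)) : ENNReal), ?_, ?_, ?_⟩
  · -- radius bound
    have hsum : Summable (fun n => A n * (r/2) ^ n) := by
      refine (h (r/2) ?_).summable
      rw [abs_of_pos hr2]; linarith
    obtain ⟨C, hC⟩ : BddAbove (Set.range fun n => ‖A n * (r/2) ^ n‖) :=
      (hsum.tendsto_atTop_zero.norm.bddAbove_range)
    refine FormalMultilinearSeries.le_radius_of_bound p C fun n => ?_
    have h1 : ‖p n‖ ≤ |A n| := by
      show ‖A n • ContinuousMultilinearMap.mkPiAlgebraFin ℝ n ℝ‖ ≤ |A n|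
      calc ‖A n • ContinuousMultilinearMap.mkPiAlgebraFin ℝ n ℝ‖
          ≤ ‖A n‖ * ‖ContinuousMultilinearMap.mkPiAlgebraFin ℝ n ℝ‖ :=
            ContinuousMultilinearMap.opNorm_smul_le _ _
        _ ≤ |A n| * 1 := by
            rw [Real.norm_eq_abs]
            exact mul_le_mul_of_nonneg_left
              (ContinuousMultilinearMap.norm_mkPiAlgebraFin_le.trans (by norm_num)) (abs_nonneg _)
        _ = |A n| := mul_one _
    have h2 : |A n| * (r/2) ^ n ≤ C := by
      have := hC ⟨n, rfl⟩
      simpa [abs_mul, abs_of_pos hr2, abs_of_pos hr] using this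
    calc ‖p n‖ * ((Real.toNNReal (r/2)) : ℝ) ^ n ≤ |A n| * (r/2)^n := by
          rw [hcoe]; exact mul_le_mul_of_nonneg_right h1 (pow_nonneg hr2.le n)
      _ ≤ C := h2
  · exact_mod_cast Real.toNNReal_pos.mpr hr2
  · intro y hy
    rw [Metric.emetric_ball_nnreal, Metric.mem_ball, Real.dist_eq, sub_zero, hcoe] at hy
    have hy' : |y| < r := by linarith
    have := h y hy'
    simp only [zero_add]
    convert this using 2 with n
    · rfl
    simp [hp, ContinuousMultilinearMap.mkPiAlgebraFin_apply, List.prod_ofFn]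

lemma coeff_eq (A B : ℕ → ℝ) (S : ℝ → ℝ) (r : ℝ) (hr : 0 < r)
    (hA : ∀ t : ℝ, |t| < r → HasSum (fun n => A n * t ^ n) (S t))
    (hB : ∀ t : ℝ, |t| < r → HasSum (fun n => B n * t ^ n) (S t)) : A = B := by
  have h := (myAux A S r hr hA).eq_formalMultilinearSeries (myAux B S r hr hB)
  funext n
  have h2 := congrArg
    (fun q : ContinuousMultilinearMap ℝ (fun _ : Fin n => ℝ) ℝ => q (fun _ => (1:ℝ)))
    (congrFun h n)
  simpa [ContinuousMultilinearMap.mkPiAlgebraFin_apply, List.prod_ofFn] using h2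

lemma slope_exp : Filter.Tendsto (fun t : ℝ => (Real.exp t - 1) / t)
    (nhdsWithin 0 {(0:ℝ)}ᶜ) (nhds 1) := by
  have h := (Real.hasDerivAt_exp 0)
  rw [hasDerivAt_iff_tendsto_slope, Real.exp_zero] at h
  refine h.congr fun t => ?_
  rw [slope_def_field, Real.exp_zero, sub_zero]

lemma G0_eq_F0 (F G : ℝ → ℝ) (R' : ℝ) (hR' : 0 < R') (m : ℕ) (hm : 1 ≤ m)
    (hFcont : ContinuousAt F 0) (hGcont : ContinuousAt G 0)
    (hG : ∀ t : ℝ, |t| < R' → t ≠ 0 →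
      G t = (Real.exp (m * t) - 1) / (m * (Real.exp t - 1)) * F (m * t)) :
    G 0 = F 0 := by
  have hm0 : (m:ℝ) ≠ 0 := by positivity
  have hmul : Filter.Tendsto (fun t : ℝ => (m:ℝ) * t)
      (nhdsWithin 0 {(0:ℝ)}ᶜ) (nhdsWithin 0 {(0:ℝ)}ᶜ) := by
    rw [tendsto_nhdsWithin_iff]
    constructor
    · have h0 := (Continuous.tendsto (by continuity : Continuous (fun t : ℝ => (m:ℝ) * t)) 0)
      simpa using h0.mono_left nhdsWithin_le_nhds
    · filter_upwards [self_mem_nhdsWithin] with t ht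
      simp only [Set.mem_compl_iff, Set.mem_singleton_iff] at ht ⊢
      exact mul_ne_zero hm0 ht
  have ha : Filter.Tendsto (fun t : ℝ => (Real.exp (m * t) - 1) / (m * t))
      (nhdsWithin 0 {(0:ℝ)}ᶜ) (nhds 1) := slope_exp.comp hmul
  have hphi : Filter.Tendsto (fun t : ℝ => (Real.exp (m * t) - 1) / (m * (Real.exp t - 1)))
      (nhdsWithin 0 {(0:ℝ)}ᶜ) (nhds 1) := by
    have hdiv := ha.div slope_exp (one_ne_zero)
    rw [div_one] at hdiv
    refine hdiv.congr' ?_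
    filter_upwards [self_mem_nhdsWithin] with t ht
    simp only [Set.mem_compl_iff, Set.mem_singleton_iff] at ht
    have he : Real.exp t - 1 ≠ 0 := by
      intro h
      exact ht (Real.exp_eq_exp.mp (by rw [Real.exp_zero]; linarith))
    have hmt : (m:ℝ) * t ≠ 0 := mul_ne_zero hm0 ht
    simp only [Pi.div_apply]
    field_simp
  have hFm : Filter.Tendsto (fun t : ℝ => F ((m:ℝ) * t)) (nhdsWithin 0 {(0:ℝ)}ᶜ) (nhds (F 0)) := by
    have : Filter.Tendsto (fun t : ℝ => (m:ℝ) * t) (nhdsWithin 0 {(0:ℝ)}ᶜ) (nhds 0) := by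
      have h0 := (Continuous.tendsto (by continuity : Continuous (fun t : ℝ => (m:ℝ) * t)) 0)
      simpa using h0.mono_left nhdsWithin_le_nhds
    exact hFcont.tendsto.comp this
  have hGlim : Filter.Tendsto G (nhdsWithin 0 {(0:ℝ)}ᶜ) (nhds (F 0)) := by
    have := hphi.mul hFm
    rw [one_mul] at this
    refine this.congr' ?_
    have hball : {t : ℝ | |t| < R'} ∈ nhds (0:ℝ) := by
      have : Metric.ball (0:ℝ) R' ∈ nhds (0:ℝ) := Metric.ball_mem_nhds 0 hR'
      simpa [Metric.ball, Real.dist_eq] using this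
    filter_upwards [self_mem_nhdsWithin, Filter.mem_inf_of_left hball] with t ht hball'
    · simp only [Set.mem_compl_iff, Set.mem_singleton_iff] at ht
      exact (hG t hball' ht).symm
  have hGlim' : Filter.Tendsto G (nhdsWithin 0 {(0:ℝ)}ᶜ) (nhds (G 0)) :=
    hGcont.tendsto.mono_left nhdsWithin_le_nhds
  exact tendsto_nhds_unique hGlim' hGlim


/-- multiplication formula for the C-polynomials: if `Cf` and `Cg` are the
C-polynomial families of `F` and of `G t = ((e^{mt}−1)/(m(e^t−1))) F(mt)` respectively
(given by their exponential generating functions on `|t| < R`, resp. `|t| < R'`, with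
positive radii), then for `m ≥ 1`,
`∑_{k=0}^{m−1} C_{f,n}((x+k)/m) = m^{1−n} C_{g,n}(x)`. -/
theorem statement13 (F G : ℝ → ℝ) (Cf Cg : ℕ → ℝ → ℝ) (R R' : ℝ) (hR : 0 < R) (hR' : 0 < R')
    (m : ℕ) (hm : 1 ≤ m)
    (hCf : ∀ x t : ℝ, |t| < R →
      HasSum (fun n : ℕ => Cf n x / n.factorial * t ^ n) (F t * Real.exp (x * t)))
    (hCg : ∀ x t : ℝ, |t| < R' →
      HasSum (fun n : ℕ => Cg n x / n.factorial * t ^ n) (G t * Real.exp (x * t)))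
    (hG : ∀ t : ℝ, |t| < R' → t ≠ 0 →
      G t = (Real.exp (m * t) - 1) / (m * (Real.exp t - 1)) * F (m * t)) :
    ∀ (n : ℕ) (x : ℝ),
      ∑ k ∈ Finset.range m, Cf n ((x + k) / m)
        = (m : ℝ) ^ (1 - (n : ℤ)) * Cg n x := by
  intro n x
  have hmpos : (0:ℝ) < m := by exact_mod_cast Nat.lt_of_lt_of_le Nat.zero_lt_one hm
  have hm0 : (m:ℝ) ≠ 0 := ne_of_gt hmpos
  set r : ℝ := min R ((m:ℝ) * R') with hrdef
  have hrpos : 0 < r := lt_min hR (by positivity)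
  set S : ℝ → ℝ := fun t => (m:ℝ) * G (t / m) * Real.exp (x * (t / m)) with hSdef
  set A : ℕ → ℝ := fun j => (∑ k ∈ Finset.range m, Cf j ((x + k) / m)) / j.factorial with hAdef
  set B : ℕ → ℝ := fun j => (m:ℝ) ^ (1 - (j:ℤ)) * Cg j x / j.factorial with hBdef
  -- continuity of F and G at 0
  have hFcont : ContinuousAt F 0 := by
    have h := myAux (fun j => Cf j 0 / j.factorial) F R hR (fun t ht => by
      simpa using hCf 0 t ht)
    exact h.continuousAt
  have hGcont : ContinuousAt G 0 := by
    have h := myAux (fun j => Cg j 0 / j.factorial) G R' hR' (fun t ht => by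
      simpa using hCg 0 t ht)
    exact h.continuousAt
  have hGF0 : G 0 = F 0 := G0_eq_F0 F G R' hR' m hm hFcont hGcont hG
  -- |t/m| < R' whenever |t| < r
  have hdivR' : ∀ t : ℝ, |t| < r → |t / m| < R' := by
    intro t ht
    have h2 : |t| < (m:ℝ) * R' := lt_of_lt_of_le ht (min_le_right _ _)
    rw [abs_div, abs_of_pos hmpos, div_lt_iff₀ hmpos]
    linarith [h2]
  have hA : ∀ t : ℝ, |t| < r → HasSum (fun j => A j * t ^ j) (S t) := by
    intro t ht
    have htR : |t| < R := lt_of_lt_of_le ht (min_le_left _ _)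
    have hs : HasSum (fun j : ℕ => ∑ k ∈ Finset.range m, (Cf j ((x + k) / m) / j.factorial * t ^ j))
        (∑ k ∈ Finset.range m, F t * Real.exp (((x + k) / m) * t)) :=
      hasSum_sum fun k _ => hCf ((x + k) / m) t htR
    have hfun : (fun j : ℕ => A j * t ^ j)
        = fun j : ℕ => ∑ k ∈ Finset.range m, (Cf j ((x + k) / m) / j.factorial * t ^ j) := by
      funext j
      simp only [hAdef, Finset.sum_div, Finset.sum_mul]
    have hval : ∑ k ∈ Finset.range m, F t * Real.exp (((x + k) / m) * t) = S t := by
      rcases eq_or_ne t 0 with ht0 | ht0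
      · subst ht0
        simp [hSdef, hGF0, mul_comm]
      · have htm : t / m ≠ 0 := div_ne_zero ht0 hm0
        have hR'' : |t / m| < R' := hdivR' t ht
        have hGe := hG (t / m) hR'' htm
        have hmc : (m:ℝ) * (t / m) = t := by field_simp
        rw [hmc] at hGe
        have hexpne : Real.exp (t / m) ≠ 1 := by
          intro h
          rw [← Real.exp_zero] at h
          exact htm (Real.exp_eq_exp.mp h)
        have hexpne' : Real.exp (t / m) - 1 ≠ 0 := sub_ne_zero.mpr hexpne
        have hpow : Real.exp (t / m) ^ m = Real.exp t := by
          rw [← Real.exp_nat_mul, hmc]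
        have hgeom : ∑ k ∈ Finset.range m, Real.exp (t / m) ^ k
            = (Real.exp t - 1) / (Real.exp (t / m) - 1) := by
          rw [geom_sum_eq hexpne, hpow]
        have hterm : ∀ k : ℕ, Real.exp (((x + k) / m) * t)
            = Real.exp (x * (t / m)) * Real.exp (t / m) ^ k := by
          intro k
          rw [← Real.exp_nat_mul, ← Real.exp_add]
          congr 1
          field_simp
        calc ∑ k ∈ Finset.range m, F t * Real.exp (((x + k) / m) * t)
            = F t * Real.exp (x * (t / m)) * ∑ k ∈ Finset.range m, Real.exp (t / m) ^ k := by
              rw [Finset.mul_sum]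
              refine Finset.sum_congr rfl fun k _ => ?_
              rw [hterm k]; ring
          _ = F t * Real.exp (x * (t / m)) * ((Real.exp t - 1) / (Real.exp (t / m) - 1)) := by
              rw [hgeom]
          _ = S t := by
              rw [hSdef]
              simp only [hGe]
              field_simp
    rw [hfun, ← hval]
    exact hs
  have hB : ∀ t : ℝ, |t| < r → HasSum (fun j => B j * t ^ j) (S t) := by
    intro t ht
    have hR'' : |t / m| < R' := hdivR' t ht
    have hs := (hCg x (t / m) hR'').mul_left (m:ℝ)
    have hfun : (fun j : ℕ => (m:ℝ) * (Cg j x / j.factorial * (t / m) ^ j))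
        = fun j : ℕ => B j * t ^ j := by
      funext j
      have hz : (m:ℝ) ^ (1 - (j:ℤ)) = (m:ℝ) / (m:ℝ) ^ j := by
        rw [zpow_sub₀ hm0, zpow_one, zpow_natCast]
      rw [hBdef]
      simp only [hz, div_pow]
      field_simp
    rw [← hfun]
    convert hs using 1
    · rfl
    rw [hSdef]; ring
  have hAB : A = B := coeff_eq A B S r hrpos hA hB
  have hABn : A n = B n := congrFun hAB n
  have hfact : (n.factorial : ℝ) ≠ 0 := Nat.cast_ne_zero.mpr n.factorial_ne_zero
  rw [hAdef, hBdef] at hABn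
  simp only at hABn
  rw [div_eq_div_iff hfact hfact] at hABn
  exact mul_right_cancel₀ hfact hABn
end

section
/- If z is a complex number not in the nonnegative integers and the power series Σ u_n s^n has radius of convergence ρ ∈ (0, ∞], then the power series Σ C(z,n) u_n s^n (with generalized binomial coefficients) also has radius of convergence ρ. -/
open scoped ENNReal NNReal

/-- The generalized binomial coefficient `C(z,n) = z(z−1)⋯(z−n+1)/n!`. -/
noncomputable def genBinom (z : ℂ) (n : ℕ) : ℂ :=
  (∏ i ∈ Finset.range n, (z - i)) / (n.factorial : ℂ)

lemma genBinom_succ (z : ℂ) (n : ℕ) :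
    genBinom z (n+1) = genBinom z n * ((z - n) / (n+1)) := by
  unfold genBinom
  rw [Finset.prod_range_succ, Nat.factorial_succ]
  push_cast
  field_simp

lemma genBinom_ne_zero (z : ℂ) (hz : ∀ n : ℕ, z ≠ (n : ℂ)) (n : ℕ) : genBinom z n ≠ 0 := by
  unfold genBinom
  apply div_ne_zero
  · exact Finset.prod_ne_zero_iff.mpr fun i _ => sub_ne_zero.mpr (hz i)
  · exact_mod_cast Nat.factorial_ne_zero n

lemma geom_bound (a : ℕ → ℝ) (ha : ∀ n, 0 < a n) (r : ℝ) (hr : 0 < r)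
    (N : ℕ) (hN : ∀ n, N ≤ n → a (n+1) ≤ r * a n) :
    ∃ C > 0, ∀ n, a n ≤ C * r ^ n := by
  set C : ℝ := (Finset.range (N+1)).sup' (by simp) (fun k => a k / r ^ k) with hC
  have hCpos : 0 < C := by
    have h0 : a 0 / r ^ 0 ≤ C :=
      Finset.le_sup' (fun k => a k / r ^ k) (by simp : 0 ∈ Finset.range (N+1))
    have : 0 < a 0 / r ^ 0 := by simpa using div_pos (ha 0) (one_pos)
    linarith
  refine ⟨C, hCpos, ?_⟩
  have hmem : ∀ k, k ≤ N → a k ≤ C * r ^ k := by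
    intro k hk
    have h0 : a k / r ^ k ≤ C :=
      Finset.le_sup' (fun k => a k / r ^ k) (Finset.mem_range.mpr (by omega))
    have hrk : (0:ℝ) < r ^ k := by positivity
    calc a k = a k / r ^ k * r ^ k := by field_simp
    _ ≤ C * r ^ k := by gcongr
  intro n
  rcases le_or_gt n N with h | h
  · exact hmem n h
  · have key : ∀ m, N ≤ m → a m ≤ C * r ^ m := by
      intro m hm
      induction m, hm using Nat.le_induction with
      | base => exact hmem N le_rfl
      | succ m hm ih =>
        calc a (m+1) ≤ r * a m := hN m hm
        _ ≤ r * (C * r ^ m) := by have := ih; nlinarith [ha m]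
        _ = C * r ^ (m+1) := by ring
    exact key n h.le

lemma bdd_of_summable (f : ℕ → ℂ) (h : Summable f) : ∃ M, ∀ n, ‖f n‖ ≤ M := by
  have h1 : Filter.Tendsto (fun n => ‖f n‖) Filter.atTop (nhds 0) := by
    simpa using h.tendsto_atTop_zero.norm
  obtain ⟨M, hM⟩ := h1.bddAbove_range
  exact ⟨M, fun n => hM ⟨n, rfl⟩⟩


lemma norm_genBinom_succ (z : ℂ) (n : ℕ) :
    ‖genBinom z (n+1)‖ = ‖genBinom z n‖ * (‖z - n‖ / ((n:ℝ)+1)) := by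
  rw [genBinom_succ, norm_mul, norm_div]
  congr 2
  rw [show ((n:ℂ)+1) = ((n+1:ℕ):ℂ) by push_cast; ring, Complex.norm_natCast]
  push_cast; ring

lemma genBinom_growth (z : ℂ) (hz : ∀ n : ℕ, z ≠ (n : ℂ)) (r : ℝ) (hr : 1 < r) :
    ∃ C > 0, ∀ n, ‖genBinom z n‖ ≤ C * r ^ n := by
  apply geom_bound _ (fun n => norm_pos_iff.mpr (genBinom_ne_zero z hz n)) r (by linarith)
    ⌈‖z‖ / (r-1)⌉₊
  intro n hn
  have h1 : ‖z‖ / (r-1) ≤ n := le_trans (Nat.le_ceil _) (by exact_mod_cast hn)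
  have h2 : ‖z‖ ≤ (r-1) * n := by rw [div_le_iff₀ (by linarith)] at h1; linarith
  have h3 : ‖z - n‖ ≤ ‖z‖ + n := by
    calc ‖z - n‖ ≤ ‖z‖ + ‖(n:ℂ)‖ := norm_sub_le _ _
    _ = ‖z‖ + n := by rw [Complex.norm_natCast]
  rw [norm_genBinom_succ]
  have hpos : (0:ℝ) < (n:ℝ) + 1 := by positivity
  have h4 : ‖z - n‖ / ((n:ℝ)+1) ≤ r := by
    rw [div_le_iff₀ hpos]; nlinarith
  have h5 : (0:ℝ) ≤ ‖genBinom z n‖ := norm_nonneg _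
  nlinarith

lemma genBinom_inv_growth (z : ℂ) (hz : ∀ n : ℕ, z ≠ (n : ℂ)) (r : ℝ) (hr : 1 < r) :
    ∃ C > 0, ∀ n, ‖genBinom z n‖⁻¹ ≤ C * r ^ n := by
  apply geom_bound _ (fun n => by
    have := norm_pos_iff.mpr (genBinom_ne_zero z hz n); positivity) r (by linarith)
    ⌈(r * ‖z‖ + 1) / (r-1)⌉₊
  intro n hn
  have h1 : (r * ‖z‖ + 1) / (r-1) ≤ n := le_trans (Nat.le_ceil _) (by exact_mod_cast hn)
  have h2 : r * ‖z‖ + 1 ≤ (r-1) * n := by rw [div_le_iff₀ (by linarith)] at h1; linarith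
  have h3 : (n:ℝ) - ‖z‖ ≤ ‖z - n‖ := by
    calc (n:ℝ) - ‖z‖ = ‖(n:ℂ)‖ - ‖z‖ := by rw [Complex.norm_natCast]
    _ ≤ ‖(n:ℂ) - z‖ := norm_sub_norm_le _ _
    _ = ‖z - n‖ := by rw [norm_sub_rev]
  have hzn : (0:ℝ) < ‖z - n‖ := by nlinarith [norm_nonneg z]
  rw [norm_genBinom_succ, mul_inv, inv_div]
  have h4 : ((n:ℝ)+1) / ‖z - n‖ ≤ r := by
    rw [div_le_iff₀ hzn]; nlinarith [norm_nonneg z]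
  have h5 : (0:ℝ) ≤ ‖genBinom z n‖⁻¹ := by positivity
  calc ‖genBinom z n‖⁻¹ * (((n:ℝ)+1) / ‖z - n‖) ≤ ‖genBinom z n‖⁻¹ * r := by
        exact mul_le_mul_of_nonneg_left h4 h5
  _ = r * ‖genBinom z n‖⁻¹ := by ring

/-- if `z ∉ ℤ_{≥0}` and `∑ u_n s^n` has radius of convergence `ρ ∈ (0,∞]`,
then `∑ C(z,n) u_n s^n` also has radius of convergence `ρ` (radius of convergence is
expressed by summability for `‖s‖ < ρ` and divergence for `‖s‖ > ρ`). -/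
theorem statement14 (u : ℕ → ℝ) (ρ : ℝ≥0∞) (hρ : 0 < ρ)
    (z : ℂ) (hz : ∀ n : ℕ, z ≠ (n : ℂ))
    (h1 : ∀ s : ℂ, (‖s‖₊ : ℝ≥0∞) < ρ → Summable (fun n : ℕ => (u n : ℂ) * s ^ n))
    (h2 : ∀ s : ℂ, ρ < (‖s‖₊ : ℝ≥0∞) → ¬ Summable (fun n : ℕ => (u n : ℂ) * s ^ n)) :
    (∀ s : ℂ, (‖s‖₊ : ℝ≥0∞) < ρ →
        Summable (fun n : ℕ => genBinom z n * (u n : ℂ) * s ^ n)) ∧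
    (∀ s : ℂ, ρ < (‖s‖₊ : ℝ≥0∞) →
        ¬ Summable (fun n : ℕ => genBinom z n * (u n : ℂ) * s ^ n)) := by
  constructor
  · intro s hs
    obtain ⟨c, hc1, hc2⟩ := ENNReal.lt_iff_exists_nnreal_btwn.mp hs
    have hc1' : ‖s‖ < (c:ℝ) := by exact_mod_cast ENNReal.coe_lt_coe.mp hc1
    have hc0 : (0:ℝ) < c := lt_of_le_of_lt (norm_nonneg s) hc1'
    have hnc : ‖((c:ℝ):ℂ)‖₊ = c := by
      ext1
      simp [Real.norm_of_nonneg hc0.le]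
    have hsum : Summable (fun n : ℕ => (u n : ℂ) * ((c:ℝ):ℂ) ^ n) :=
      h1 _ (by rw [hnc]; exact hc2)
    obtain ⟨M, hM⟩ := bdd_of_summable _ hsum
    have hM0 : 0 ≤ M := le_trans (norm_nonneg _) (hM 0)
    set q : ℝ := ‖s‖ / c with hqdef
    have hq0 : 0 ≤ q := by positivity
    have hq1 : q < 1 := by rw [hqdef, div_lt_one hc0]; exact hc1'
    set r : ℝ := 2 / (1 + q) with hrdef
    have hr1 : 1 < r := by rw [hrdef, lt_div_iff₀ (by linarith)]; linarith
    have hrq : r * q < 1 := by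
      rw [hrdef, div_mul_eq_mul_div, div_lt_one (by linarith)]; linarith
    obtain ⟨C, hCpos, hC⟩ := genBinom_growth z hz r hr1
    apply Summable.of_norm_bounded (g := fun n => (M * C) * (r * q) ^ n)
      (((summable_geometric_of_lt_one (by positivity) hrq)).mul_left _)
    intro n
    have hcn : ‖((c:ℝ):ℂ)‖ = (c:ℝ) := by simp [Real.norm_of_nonneg hc0.le]
    have hseq : ‖s‖ = (c:ℝ) * q := by rw [hqdef, mul_div_cancel₀ _ (ne_of_gt hc0)]
    have key : ‖genBinom z n * (u n : ℂ) * s ^ n‖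
        = ‖genBinom z n‖ * (‖(u n : ℂ) * ((c:ℝ):ℂ) ^ n‖ * q ^ n) := by
      rw [norm_mul, norm_mul, norm_mul, norm_pow, norm_pow, hseq, hcn, mul_pow]
      ring
    rw [key]
    calc ‖genBinom z n‖ * (‖(u n : ℂ) * ((c:ℝ):ℂ) ^ n‖ * q ^ n)
        ≤ (C * r ^ n) * (M * q ^ n) := by
          apply mul_le_mul (hC n) (by gcongr; exact hM n) (by positivity) (by positivity)
      _ = (M * C) * (r * q) ^ n := by rw [mul_pow]; ring
  · intro s hs hsum
    obtain ⟨c, hc1, hc2⟩ := ENNReal.lt_iff_exists_nnreal_btwn.mp hs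
    have hc2' : (c:ℝ) < ‖s‖ := by exact_mod_cast ENNReal.coe_lt_coe.mp hc2
    have hc0 : (0:ℝ) < c := by
      have := lt_of_lt_of_le hρ hc1.le
      exact_mod_cast ENNReal.coe_pos.mp (lt_of_lt_of_le hρ hc1.le)
    have hs0 : (0:ℝ) < ‖s‖ := lt_trans hc0 hc2'
    have hnc : ‖((c:ℝ):ℂ)‖₊ = c := by
      ext1
      simp [Real.norm_of_nonneg hc0.le]
    obtain ⟨M, hM⟩ := bdd_of_summable _ hsum
    have hM0 : 0 ≤ M := le_trans (norm_nonneg _) (hM 0)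
    set q : ℝ := (c:ℝ) / ‖s‖ with hqdef
    have hq0 : 0 ≤ q := by positivity
    have hq1 : q < 1 := by rw [hqdef, div_lt_one hs0]; exact hc2'
    set r : ℝ := 2 / (1 + q) with hrdef
    have hr1 : 1 < r := by rw [hrdef, lt_div_iff₀ (by linarith)]; linarith
    have hrq : r * q < 1 := by
      rw [hrdef, div_mul_eq_mul_div, div_lt_one (by linarith)]; linarith
    obtain ⟨C, hCpos, hC⟩ := genBinom_inv_growth z hz r hr1
    refine h2 ((c:ℝ):ℂ) (by rw [hnc]; exact hc1) ?_
    apply Summable.of_norm_bounded (g := fun n => (M * C) * (r * q) ^ n)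
      (((summable_geometric_of_lt_one (by positivity) hrq)).mul_left _)
    intro n
    have hgn : ‖genBinom z n‖ ≠ 0 := norm_ne_zero_iff.mpr (genBinom_ne_zero z hz n)
    have hcn : ‖((c:ℝ):ℂ)‖ = (c:ℝ) := by simp [Real.norm_of_nonneg hc0.le]
    have hceq : (c:ℝ) = ‖s‖ * q := by rw [hqdef, mul_div_cancel₀ _ (ne_of_gt hs0)]
    have key : ‖(u n : ℂ) * ((c:ℝ):ℂ) ^ n‖
        = ‖genBinom z n * (u n : ℂ) * s ^ n‖ * (‖genBinom z n‖⁻¹ * q ^ n) := by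
      rw [norm_mul, norm_mul, norm_mul, norm_pow, norm_pow, hcn, hceq, mul_pow]
      have hgn' : ‖genBinom z n‖ ≠ 0 := hgn
      field_simp
    rw [key]
    calc ‖genBinom z n * (u n : ℂ) * s ^ n‖ * (‖genBinom z n‖⁻¹ * q ^ n)
        ≤ M * ((C * r ^ n) * q ^ n) := by
          apply mul_le_mul (hM n) (by gcongr; exact hC n) (by positivity) hM0
      _ = (M * C) * (r * q) ^ n := by rw [mul_pow]; ring
end

section
/- For Re(z) > 0 and Re(s) > 1/ρ, the integral ∫_0^∞ t^{z−1} e^{−st} u(−t) dt converges and equals Γ(z) · Σ_{n=0}^∞ C(−z,n) u_n s^{−z−n}, where u(t) = Σ_{n≥0} (u_n/n!) t^n. -/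
open scoped ENNReal NNReal
open MeasureTheory

open Set Filter Topology

/-- Real integrability of `t^(a-1) e^{-bt}` on `(0,∞)`. -/
lemma intR {a b : ℝ} (ha : 0 < a) (hb : 0 < b) :
    IntegrableOn (fun t : ℝ => t ^ (a - 1) * Real.exp (-(b * t))) (Set.Ioi 0) := by
  have h := Real.GammaIntegral_convergent ha
  rw [← mul_zero b, ← integrableOn_Ioi_comp_mul_left_iff _ _ hb] at h
  have h3 : IntegrableOn (fun x : ℝ => b ^ (1 - a) * (Real.exp (-(b * x)) * (b * x) ^ (a - 1))) (Set.Ioi 0) := h.const_mul _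
  refine h3.congr_fun (fun t ht => ?_) measurableSet_Ioi
  · have ht' : (0:ℝ) < t := by simpa using ht
    beta_reduce
    rw [Real.mul_rpow hb.le ht'.le]
    rw [show b ^ (1-a) * (Real.exp (-(b*t)) * (b ^ (a-1) * t ^ (a-1)))
        = (b ^ (1-a) * b ^ (a-1)) * (t ^ (a-1) * Real.exp (-(b*t))) by ring,
      ← Real.rpow_add hb]
    norm_num

lemma normEq {c s : ℂ} {t : ℝ} (ht : 0 < t) :
    ‖(t:ℂ) ^ c * Complex.exp (-s * t)‖ = t ^ c.re * Real.exp (-(s.re * t)) := by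
  rw [norm_mul,
    Complex.norm_cpow_eq_rpow_re_of_pos ht, Complex.norm_exp]
  congr 2
  simp [Complex.neg_re, Complex.mul_re]

lemma measAux (c s : ℂ) :
    AEStronglyMeasurable (fun t : ℝ => (t:ℂ) ^ c * Complex.exp (-s * t))
      (volume.restrict (Set.Ioi 0)) := by
  refine ContinuousOn.aestronglyMeasurable (ContinuousOn.mul ?_ ?_) measurableSet_Ioi
  · apply continuousOn_of_forall_continuousAt
    intro x hx
    exact (continuousAt_cpow_const (Complex.ofReal_mem_slitPlane.2 hx)).comp
      Complex.continuous_ofReal.continuousAt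
  · exact (Complex.continuous_exp.comp
      (continuous_const.mul Complex.continuous_ofReal)).continuousOn

lemma intC {a s : ℂ} (ha : 0 < a.re) (hs : 0 < s.re) :
    IntegrableOn (fun t : ℝ => (t:ℂ) ^ (a - 1) * Complex.exp (-s * t)) (Set.Ioi 0) := by
  refine (intR ha hs).mono' (measAux _ _) ?_
  refine (ae_restrict_iff' measurableSet_Ioi).mpr (ae_of_all _ fun t ht => ?_)
  rw [normEq ht]
  simp [Complex.sub_re]

lemma fg_real {a : ℂ} (ha : 0 < a.re) {r : ℝ} (hr : 0 < r) :
    ∫ t in Set.Ioi (0:ℝ), (t:ℂ) ^ (a - 1) * Complex.exp (-(r:ℂ) * t)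
      = Complex.Gamma a * (r:ℂ) ^ (-a) := by
  have h := Complex.integral_cpow_mul_exp_neg_mul_Ioi ha hr
  simp_rw [neg_mul] at h ⊢
  rw [h, one_div, Complex.inv_cpow _ _ (by
      rw [Complex.arg_ofReal_of_nonneg hr.le]; exact Real.pi_ne_zero.symm),
    ← Complex.cpow_neg, mul_comm]

lemma f_diff {a : ℂ} (ha : 0 < a.re) {w₀ : ℂ} (hw : 0 < w₀.re) :
    DifferentiableAt ℂ
      (fun w => ∫ t in Set.Ioi (0:ℝ), (t:ℂ) ^ (a - 1) * Complex.exp (-w * t)) w₀ := by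
  set ε : ℝ := w₀.re / 2 with hε
  have hε0 : 0 < ε := by positivity
  have key := hasDerivAt_integral_of_dominated_loc_of_deriv_le
    (F := fun (w : ℂ) (t : ℝ) => (t:ℂ) ^ (a - 1) * Complex.exp (-w * t))
    (F' := fun (w : ℂ) (t : ℝ) => (t:ℂ) ^ (a - 1) * Complex.exp (-w * t) * (-t : ℝ))
    (x₀ := w₀) (bound := fun t : ℝ => t ^ a.re * Real.exp (-(ε * t)))
    (μ := volume.restrict (Set.Ioi 0)) (Metric.ball_mem_nhds w₀ hε0)
    (Eventually.of_forall fun x => measAux _ _) (intC ha hw)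
    ((measAux _ _).mul (Complex.continuous_ofReal.comp continuous_neg).aestronglyMeasurable.restrict)
    ?_ ?_ ?_
  · exact key.2.differentiableAt
  · -- bound
    refine (ae_restrict_iff' measurableSet_Ioi).mpr (ae_of_all _ fun t ht => fun x hx => ?_)
    have hxre : ε ≤ x.re := by
      have h1 : |x.re - w₀.re| ≤ ‖x - w₀‖ := by
        simpa using Complex.abs_re_le_norm (x - w₀)
      have h2 : ‖x - w₀‖ < ε := by simpa [Metric.mem_ball, dist_eq_norm] using hx
      have := abs_sub_lt_iff.mp (lt_of_le_of_lt h1 h2)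
      simp only [hε] at *; linarith [this.2]
    rw [norm_mul, normEq ht]
    have h3 : ‖((-t : ℝ) : ℂ)‖ = t := by
      simp [Complex.norm_real, abs_of_pos (show (0:ℝ) < t from ht)]
    rw [h3]
    have h4 : t ^ (a - 1).re * Real.exp (-(x.re * t)) * t = t ^ a.re * Real.exp (-(x.re * t)) := by
      rw [Complex.sub_re, Complex.one_re]
      rw [show t ^ (a.re - 1) * Real.exp (-(x.re * t)) * t
          = t ^ (a.re - 1) * t * Real.exp (-(x.re * t)) by ring]
      rw [← Real.rpow_add_one ht.ne']
      ring_nf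
    rw [h4]
    have : Real.exp (-(x.re * t)) ≤ Real.exp (-(ε * t)) := by
      apply Real.exp_le_exp.mpr
      have := mul_le_mul_of_nonneg_right hxre ht.le
      linarith
    exact mul_le_mul_of_nonneg_left this (Real.rpow_nonneg ht.le _)
  · -- bound integrable
    have := intR (show (0:ℝ) < a.re + 1 by linarith) hε0
    simpa [IntegrableOn] using this
  · -- h_diff
    refine (ae_restrict_iff' measurableSet_Ioi).mpr (ae_of_all _ fun t ht => fun x hx => ?_)
    have h1 : HasDerivAt (fun w : ℂ => -w * t) (-t : ℝ) x := by
      simpa using ((hasDerivAt_id x).neg.mul_const (t:ℂ))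
    have h2 := h1.cexp
    have h3 := h2.const_mul ((t:ℂ) ^ (a - 1))
    simpa only [mul_assoc] using h3

lemma lapGamma {a s : ℂ} (ha : 0 < a.re) (hs : 0 < s.re) :
    ∫ t in Set.Ioi (0:ℝ), (t:ℂ) ^ (a - 1) * Complex.exp (-s * t)
      = Complex.Gamma a * s ^ (-a) := by
  set U : Set ℂ := {w | 0 < w.re} with hU
  have hUopen : IsOpen U := isOpen_lt continuous_const Complex.continuous_re
  set f : ℂ → ℂ := fun w => ∫ t in Set.Ioi (0:ℝ), (t:ℂ) ^ (a - 1) * Complex.exp (-w * t)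
    with hf_def
  set g : ℂ → ℂ := fun w => Complex.Gamma a * w ^ (-a) with hg_def
  have hf : DifferentiableOn ℂ f U := fun w hw => (f_diff ha hw).differentiableWithinAt
  have hg : DifferentiableOn ℂ g U := by
    intro w hw
    exact ((differentiableAt_id.cpow (differentiableAt_const _) (Or.inl hw)).const_mul _).differentiableWithinAt
  have hfreq : ∃ᶠ w in 𝓝[≠] (1 : ℂ), f w = g w := by
    have htend : Filter.Tendsto (fun n : ℕ => ((1 + ((n:ℝ)+1)⁻¹ : ℝ) : ℂ)) atTop (𝓝[≠] 1) := by
      apply tendsto_nhdsWithin_of_tendsto_nhds_of_eventually_within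
      · have : Filter.Tendsto (fun n : ℕ => (1 + ((n:ℝ)+1)⁻¹ : ℝ)) atTop (𝓝 1) := by
          have h0 : Filter.Tendsto (fun n : ℕ => ((n:ℝ)+1)⁻¹) atTop (𝓝 0) :=
            tendsto_one_div_add_atTop_nhds_zero_nat.congr (fun n => by rw [one_div])
          simpa using tendsto_const_nhds.add h0
        have := (Complex.continuous_ofReal.tendsto 1).comp this
        refine (this.congr (fun n => rfl)).mono_right (le_of_eq ?_)
        norm_num
      · refine Filter.Eventually.of_forall fun n => ?_
        simp only [Set.mem_compl_iff, Set.mem_singleton_iff]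
        intro hcon
        have : (1 + ((n:ℝ)+1)⁻¹ : ℝ) = 1 := by exact_mod_cast hcon
        have hpos : (0:ℝ) < ((n:ℝ)+1)⁻¹ := by positivity
        linarith
    refine htend.frequently ((Filter.Eventually.of_forall fun n => ?_).frequently)
    have hr : (0:ℝ) < 1 + ((n:ℝ)+1)⁻¹ := by positivity
    exact fg_real ha hr
  have heq : Set.EqOn f g U :=
    (hf.analyticOnNhd hUopen).eqOn_of_preconnected_of_frequently_eq
      (hg.analyticOnNhd hUopen) (convex_halfSpace_re_gt 0).isPreconnected
      (by simp [hU] : (1:ℂ) ∈ U) hfreq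
  exact heq hs

lemma Gamma_add_nat' {a : ℂ} (ha : 0 < a.re) (n : ℕ) :
    Complex.Gamma (a + n) = Complex.Gamma a * ∏ i ∈ Finset.range n, (a + i) := by
  induction n with
  | zero => simp
  | succ n ih =>
    have hne : a + (n:ℂ) ≠ 0 := by
      intro h
      have h' := congrArg Complex.re h
      simp only [Complex.add_re, Complex.natCast_re, Complex.zero_re] at h'
      have hn : (0:ℝ) ≤ (n:ℝ) := Nat.cast_nonneg n
      linarith
    have h2 : (a + ((n+1 : ℕ):ℂ)) = (a + n) + 1 := by push_cast; ring
    rw [h2, Complex.Gamma_add_one _ hne, ih, Finset.prod_range_succ]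
    ring

lemma gsum {c q : ℝ} (hc : 0 < c) (hq : 1 < q) :
    Summable (fun n : ℕ => Real.Gamma (c + n) / (n.factorial * q ^ n)) := by
  set g : ℕ → ℝ := fun n => Real.Gamma (c + n) / (n.factorial * q ^ n) with hg
  have hq0 : 0 < q := lt_trans one_pos hq
  have hgpos : ∀ n, 0 < g n := fun n =>
    div_pos (Real.Gamma_pos_of_pos (by positivity)) (by positivity)
  refine summable_of_ratio_test_tendsto_lt_one (l := 1/q)
    (by rw [div_lt_one hq0]; exact hq)
    (Filter.Eventually.of_forall fun n => (hgpos n).ne') ?_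
  have key : ∀ n : ℕ, ‖g (n+1)‖ / ‖g n‖ = (c + n) / (((n:ℝ) + 1) * q) := by
    intro n
    rw [Real.norm_eq_abs, Real.norm_eq_abs, abs_of_pos (hgpos _), abs_of_pos (hgpos _)]
    have hΓ : 0 < Real.Gamma (c + n) := Real.Gamma_pos_of_pos (by positivity)
    have h1 : (c + ((n+1 : ℕ) : ℝ)) = (c + n) + 1 := by push_cast; ring
    simp only [hg]
    rw [h1, Real.Gamma_add_one (by positivity : (c + (n:ℝ)) ≠ 0), Nat.factorial_succ]
    have hfac : ((n.factorial : ℝ)) ≠ 0 := by positivity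
    have hqn : (q : ℝ) ^ n ≠ 0 := by positivity
    push_cast
    rw [pow_succ]
    field_simp
  rw [show (fun n => ‖g (n+1)‖/‖g n‖) = fun n : ℕ => (c + n)/(((n:ℝ)+1)*q) from funext key]
  have h1 : Filter.Tendsto (fun n : ℕ => (c - 1) / ((n:ℝ) + 1)) Filter.atTop (𝓝 0) :=
    Filter.Tendsto.div_atTop tendsto_const_nhds
      (tendsto_atTop_add_const_right _ _ tendsto_natCast_atTop_atTop)
  have h2 : Filter.Tendsto (fun n : ℕ => (1 + (c - 1) / ((n:ℝ) + 1)) / q)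
      Filter.atTop (𝓝 (1/q)) := by
    have h3 := ((tendsto_const_nhds (x := (1:ℝ))).add h1).div_const q
    simpa using h3
  refine h2.congr fun n => ?_
  have hne : ((n:ℝ) + 1) ≠ 0 := by positivity
  field_simp
  ring

/-- The entire function `u(t) = ∑ u_n/n! t^n` attached to the sequence `u_n`. -/
noncomputable def ufun (u : ℕ → ℝ) (t : ℝ) : ℝ :=
  ∑' n : ℕ, u n / n.factorial * t ^ n

set_option maxHeartbeats 1000000 in
/-- a special case of Ramanujan's master theorem: if `∑ u_n s^n` has
radius of convergence `ρ > 0`, `Re z > 0` and `Re s > 1/ρ`, then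
`∫_0^∞ t^{z−1} e^{−st} u(−t) dt` converges and equals `Γ(z) ∑ C(−z,n) u_n s^{−z−n}`. -/
theorem statement15 (u : ℕ → ℝ) (ρ : ℝ≥0∞) (hρ : 0 < ρ)
    (h1 : ∀ s : ℂ, (‖s‖₊ : ℝ≥0∞) < ρ → Summable (fun n : ℕ => (u n : ℂ) * s ^ n))
    (h2 : ∀ s : ℂ, ρ < (‖s‖₊ : ℝ≥0∞) → ¬ Summable (fun n : ℕ => (u n : ℂ) * s ^ n))
    (z s : ℂ) (hz : 0 < z.re) (hs : (ρ⁻¹).toReal < s.re) :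
    IntegrableOn (fun t : ℝ => (t : ℂ) ^ (z - 1) * Complex.exp (-s * t) * (ufun u (-t) : ℝ))
        (Set.Ioi (0 : ℝ)) ∧
    (∫ t in Set.Ioi (0 : ℝ),
        (t : ℂ) ^ (z - 1) * Complex.exp (-s * t) * (ufun u (-t) : ℝ))
      = Complex.Gamma z * ∑' n : ℕ, genBinom (-z) n * (u n : ℂ) * s ^ (-z - n) := by
  clear h2
  have hσ : 0 < s.re := lt_of_le_of_lt ENNReal.toReal_nonneg hs
  -- choose a radius y with 1/s.re < y and (y : ℝ≥0∞) < ρ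
  have key : ENNReal.ofReal (s.re)⁻¹ < ρ := by
    rcases eq_or_ne ρ ⊤ with h | h
    · rw [h]; exact ENNReal.ofReal_lt_top
    · have hρ' : 0 < ρ.toReal := ENNReal.toReal_pos hρ.ne' h
      have h2' : (ρ.toReal)⁻¹ < s.re := by rwa [ENNReal.toReal_inv] at hs
      have h3 : (s.re)⁻¹ < ρ.toReal := (inv_lt_comm₀ hσ hρ').mpr h2'
      calc ENNReal.ofReal (s.re)⁻¹ < ENNReal.ofReal ρ.toReal :=
            (ENNReal.ofReal_lt_ofReal_iff hρ').mpr h3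
        _ = ρ := ENNReal.ofReal_toReal h
  obtain ⟨Y, hY1, hY2⟩ := exists_between key
  have hYt : Y ≠ ⊤ := (hY2.trans_le le_top).ne
  set y := Y.toReal with hydef
  have hY0 : Y ≠ 0 := by
    intro h0
    rw [h0] at hY1
    exact absurd hY1 (by simp)
  have hy0 : 0 < y := ENNReal.toReal_pos hY0 hYt
  have hyinv : (s.re)⁻¹ < y := by
    rw [← ENNReal.ofReal_toReal hYt] at hY1
    exact (ENNReal.ofReal_lt_ofReal_iff_of_nonneg (inv_pos.mpr hσ).le).mp hY1
  have hyρ : (‖((y:ℝ) : ℂ)‖₊ : ℝ≥0∞) < ρ := by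
    rw [Complex.nnnorm_real, ← enorm_eq_nnnorm, Real.enorm_eq_ofReal hy0.le, hydef,
      ENNReal.ofReal_toReal hYt]
    exact hY2
  have hsumC := h1 _ hyρ
  have habs : Summable (fun n => |u n| * y ^ n) := by
    have h := summable_norm_iff.mpr hsumC
    refine h.congr fun n => ?_
    rw [norm_mul, norm_pow, Complex.norm_real, Complex.norm_real, Real.norm_eq_abs,
      Real.norm_eq_abs, abs_of_pos hy0]
  set A := ∑' n, |u n| * y ^ n with hA
  have hterm : ∀ n, |u n| * y ^ n ≤ A := fun n => Summable.le_tsum habs n fun m _ => by positivity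
  have hA0 : 0 ≤ A := le_trans (by positivity) (hterm 0)
  -- summability of the power series defining `ufun` at every point, with abs bound
  have habs_le : ∀ (t : ℝ) (n : ℕ),
      |u n| / n.factorial * |t| ^ n ≤ A * ((|t|/y) ^ n / n.factorial) := by
    intro t n
    have h2' : |u n| * |t| ^ n ≤ A * (|t|/y) ^ n := by
      rw [div_pow, mul_div_assoc', le_div_iff₀ (by positivity)]
      calc |u n| * |t| ^ n * y ^ n = (|u n| * y ^ n) * |t| ^ n := by ring
        _ ≤ A * |t| ^ n := mul_le_mul_of_nonneg_right (hterm n) (by positivity)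
    calc |u n| / n.factorial * |t| ^ n = (|u n| * |t| ^ n) / n.factorial := by ring
      _ ≤ (A * (|t|/y) ^ n) / n.factorial := by gcongr
      _ = A * ((|t|/y) ^ n / n.factorial) := by ring
  have hsabs : ∀ t : ℝ, Summable (fun n => |u n| / n.factorial * |t| ^ n) := by
    intro t
    refine Summable.of_nonneg_of_le (fun n => by positivity) (habs_le t)
      ((Real.summable_pow_div_factorial (|t|/y)).mul_left A)
  have hsumm : ∀ t : ℝ, Summable (fun n => u n / n.factorial * t ^ n) := by
    intro t
    apply Summable.of_norm
    refine ((hsabs t).congr fun n => ?_)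
    rw [Real.norm_eq_abs, abs_mul, abs_div, abs_pow, Nat.abs_cast]
  have hufun_hasSum : ∀ t : ℝ, HasSum (fun n => u n / n.factorial * t ^ n) (ufun u t) :=
    fun t => (hsumm t).hasSum
  -- bound on |ufun u (-t)| for t ≥ 0
  have hufun_bd : ∀ t : ℝ, 0 ≤ t → |ufun u (-t)| ≤ A * Real.exp (t / y) := by
    intro t ht
    have habs_t : |(-t)| = |t| := abs_neg t
    have h1' : |ufun u (-t)| ≤ ∑' n, |u n| / n.factorial * |t| ^ n := by
      have := norm_tsum_le_tsum_norm (f := fun n => u n / n.factorial * (-t) ^ n)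
        (((hsabs (-t)).congr fun n => by
          rw [Real.norm_eq_abs, abs_mul, abs_div, abs_pow, Nat.abs_cast, habs_t]))
      rw [Real.norm_eq_abs] at this
      refine le_trans this (le_of_eq (tsum_congr fun n => ?_))
      rw [Real.norm_eq_abs, abs_mul, abs_div, abs_pow, Nat.abs_cast, habs_t]
    refine h1'.trans ?_
    have hexp : ∑' n : ℕ, ((t/y) ^ n / (n.factorial : ℝ)) = Real.exp (t/y) := by
      rw [Real.exp_eq_exp_ℝ, NormedSpace.exp_eq_tsum_div]
    calc ∑' n, |u n| / n.factorial * |t| ^ n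
        ≤ ∑' n, A * ((|t|/y) ^ n / n.factorial) := by
          refine Summable.tsum_le_tsum (fun n => habs_le t n) (hsabs t)
            ((Real.summable_pow_div_factorial (|t|/y)).mul_left A)
      _ = A * Real.exp (t/y) := by
          rw [tsum_mul_left, ← hexp, abs_of_nonneg ht]
  -- measurability of t ↦ ufun u (-t)
  have hmeasu : Measurable fun t : ℝ => ufun u (-t) := by
    apply measurable_of_tendsto_metrizable
      (f := fun N t => ∑ n ∈ Finset.range N, u n / n.factorial * (-t) ^ n)
    · intro N
      exact (continuous_finset_sum _ fun n _ =>
        (continuous_const.mul (continuous_neg.pow n))).measurable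
    · rw [tendsto_pi_nhds]
      intro t
      exact (hufun_hasSum (-t)).tendsto_sum_nat
  -- the summands
  set F : ℕ → ℝ → ℂ := fun n t =>
    (t:ℂ) ^ (z - 1) * Complex.exp (-s * t) * ((u n / n.factorial * (-t) ^ n : ℝ) : ℂ) with hF
  have hzn : ∀ n : ℕ, 0 < (z + n).re := fun n => by
    simp only [Complex.add_re, Complex.natCast_re]
    have : (0:ℝ) ≤ n := Nat.cast_nonneg n
    linarith
  have hzn' : ∀ n : ℕ, 0 < z.re + (n:ℝ) := fun n => by
    have : (0:ℝ) ≤ n := Nat.cast_nonneg n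
    linarith
  have hFeq : ∀ n : ℕ, ∀ t ∈ Set.Ioi (0:ℝ), F n t
      = ((u n / n.factorial * (-1:ℝ) ^ n : ℝ) : ℂ)
        * ((t:ℂ) ^ ((z + n) - 1) * Complex.exp (-s * t)) := by
    intro n t ht
    have ht' : (t:ℂ) ≠ 0 := Complex.ofReal_ne_zero.mpr (ne_of_gt ht)
    simp only [hF]
    have h1' : ((-t) ^ n : ℝ) = (-1:ℝ) ^ n * t ^ n := by rw [neg_pow]
    rw [h1']
    have h2' : (t:ℂ) ^ ((z + n) - 1) = (t:ℂ) ^ (z - 1) * ((t:ℂ) ^ (n:ℕ)) := by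
      rw [← Complex.cpow_natCast, ← Complex.cpow_add _ _ ht']
      congr 1
      ring
    rw [h2']
    push_cast
    ring
  have hFint : ∀ n : ℕ, IntegrableOn (F n) (Set.Ioi 0) := by
    intro n
    have h : IntegrableOn (fun t : ℝ => ((u n / n.factorial * (-1:ℝ) ^ n : ℝ) : ℂ)
        * ((t:ℂ) ^ ((z + n) - 1) * Complex.exp (-s * t))) (Set.Ioi 0) :=
      (intC (hzn n) hσ).const_mul _
    exact h.congr_fun (fun t ht => (hFeq n t ht).symm) measurableSet_Ioi
  have hFval : ∀ n : ℕ, (∫ t in Set.Ioi (0:ℝ), F n t)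
      = ((u n / n.factorial * (-1:ℝ) ^ n : ℝ) : ℂ)
        * (Complex.Gamma (z + n) * s ^ (-(z + n))) := by
    intro n
    rw [setIntegral_congr_fun measurableSet_Ioi (fun t ht => hFeq n t ht),
      MeasureTheory.integral_const_mul, lapGamma (hzn n) hσ]
  have hFnorm : ∀ n : ℕ, ∀ t ∈ Set.Ioi (0:ℝ), ‖F n t‖
      = (|u n| / n.factorial) * (t ^ ((z.re + n) - 1) * Real.exp (-(s.re * t))) := by
    intro n t ht
    simp only [hF]
    rw [norm_mul, normEq ht, Complex.norm_real, Real.norm_eq_abs, abs_mul, abs_div,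
      abs_pow, abs_neg, abs_of_pos (show (0:ℝ) < t from ht), Nat.abs_cast, Complex.sub_re, Complex.one_re]
    have h3' : t ^ (z.re + (n:ℝ) - 1) = t ^ (z.re - 1) * t ^ n := by
      rw [show z.re + (n:ℝ) - 1 = (z.re - 1) + n by ring, Real.rpow_add ht,
        Real.rpow_natCast]
    rw [h3']
    ring
  have hFnormInt : ∀ n : ℕ, (∫ t in Set.Ioi (0:ℝ), ‖F n t‖)
      = (|u n| / n.factorial) * ((1/s.re) ^ (z.re + n) * Real.Gamma (z.re + n)) := by
    intro n
    rw [setIntegral_congr_fun measurableSet_Ioi (fun t ht => hFnorm n t ht),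
      MeasureTheory.integral_const_mul,
      Real.integral_rpow_mul_exp_neg_mul_Ioi (hzn' n) hσ]
  have hyσ : 1 < y * s.re := by
    rw [← inv_mul_cancel₀ hσ.ne']
    exact mul_lt_mul_of_pos_right hyinv hσ
  have hgsC : Summable (fun n : ℕ => Real.Gamma (z.re + n) / (n.factorial * (y * s.re) ^ n)) :=
    gsum hz hyσ
  obtain ⟨C, hC⟩ := hgsC.tendsto_atTop_zero.bddAbove_range
  have hCle : ∀ n : ℕ, Real.Gamma (z.re + n) / (n.factorial * (y * s.re) ^ n) ≤ C :=
    fun n => hC (Set.mem_range_self n)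
  have hsumNorm : Summable (fun n : ℕ => ∫ t in Set.Ioi (0:ℝ), ‖F n t‖) := by
    refine Summable.of_nonneg_of_le (fun n => ?_) (fun n => ?_)
      (habs.mul_right (C * (1/s.re) ^ z.re))
    · rw [hFnormInt n]
      have hΓ : 0 < Real.Gamma (z.re + n) := Real.Gamma_pos_of_pos (hzn' n)
      positivity
    · rw [hFnormInt n]
      have hΓ : 0 < Real.Gamma (z.re + n) := Real.Gamma_pos_of_pos (hzn' n)
      have e1 : (1/s.re) ^ (z.re + (n:ℝ)) = (1/s.re) ^ z.re * (1/s.re : ℝ) ^ (n:ℕ) := by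
        rw [Real.rpow_add (by positivity), Real.rpow_natCast]
      have e2 : (|u n| / n.factorial) * ((1/s.re) ^ (z.re + (n:ℝ)) * Real.Gamma (z.re + n))
          = (|u n| * y ^ n)
            * ((Real.Gamma (z.re + n) / (n.factorial * (y * s.re) ^ n)) * (1/s.re) ^ z.re) := by
        rw [e1]
        have hfac : ((n.factorial : ℝ)) ≠ 0 := by positivity
        have hyn : (y:ℝ) ^ n ≠ 0 := by positivity
        have hsn : (s.re) ^ n ≠ 0 := by positivity
        rw [mul_pow]
        have hs0 : s.re ≠ 0 := hσ.ne'
        field_simp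
        ring_nf
        rw [mul_assoc, ← mul_pow, mul_inv_cancel₀ hs0, one_pow, mul_one]
      rw [e2]
      have : (Real.Gamma (z.re + n) / (n.factorial * (y * s.re) ^ n)) * (1/s.re) ^ z.re
          ≤ C * (1/s.re) ^ z.re :=
        mul_le_mul_of_nonneg_right (hCle n) (by positivity)
      exact mul_le_mul_of_nonneg_left this (by positivity)
  -- pointwise tsum identity on Ioi
  have htsum : ∀ t ∈ Set.Ioi (0:ℝ), (∑' n, F n t)
      = (t:ℂ) ^ (z - 1) * Complex.exp (-s * t) * ((ufun u (-t) : ℝ) : ℂ) := by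
    intro t ht
    simp only [hF]
    rw [tsum_mul_left]
    congr 1
    exact (Complex.ofReal_tsum _).symm
  -- integrability of the full integrand
  have hb : 0 < s.re - 1/y := by
    have h4 : y⁻¹ < s.re := (inv_lt_comm₀ hσ hy0).mp hyinv
    rw [one_div]
    linarith
  have hInt : IntegrableOn
      (fun t : ℝ => (t:ℂ) ^ (z - 1) * Complex.exp (-s * t) * ((ufun u (-t) : ℝ) : ℂ))
      (Set.Ioi 0) := by
    refine ((intR hz hb).const_mul A).mono' ?_ ?_
    · exact (measAux (z-1) s).mul
        ((Complex.continuous_ofReal.measurable.comp hmeasu).aestronglyMeasurable)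
    · refine (ae_restrict_iff' measurableSet_Ioi).mpr (ae_of_all _ fun t ht => ?_)
      rw [norm_mul, normEq ht, Complex.norm_real, Real.norm_eq_abs, Complex.sub_re,
        Complex.one_re]
      have hee : Real.exp (-(s.re * t)) * Real.exp (t/y) = Real.exp (-((s.re - 1/y) * t)) := by
        rw [← Real.exp_add]
        congr 1
        field_simp
        ring
      calc t ^ (z.re - 1) * Real.exp (-(s.re * t)) * |ufun u (-t)|
          ≤ t ^ (z.re - 1) * Real.exp (-(s.re * t)) * (A * Real.exp (t/y)) := by
            have h5 := hufun_bd t (le_of_lt (Set.mem_Ioi.mp ht))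
            have h6 : (0:ℝ) < t := Set.mem_Ioi.mp ht
            have h7 : (0:ℝ) ≤ t ^ (z.re - 1) * Real.exp (-(s.re * t)) := by positivity
            exact mul_le_mul_of_nonneg_left h5 h7
        _ = A * (t ^ (z.re - 1) * (Real.exp (-(s.re * t)) * Real.exp (t/y))) := by ring
        _ = A * (t ^ (z.re - 1) * Real.exp (-((s.re - 1/y) * t))) := by rw [hee]
  refine ⟨hInt, ?_⟩
  have hswap := MeasureTheory.integral_tsum_of_summable_integral_norm hFint hsumNorm
  have hcongr : (∫ t in Set.Ioi (0:ℝ),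
        (t:ℂ) ^ (z - 1) * Complex.exp (-s * t) * ((ufun u (-t) : ℝ) : ℂ))
      = ∫ t in Set.Ioi (0:ℝ), ∑' n, F n t :=
    (setIntegral_congr_fun measurableSet_Ioi (fun t ht => (htsum t ht).symm))
  rw [hcongr, ← hswap, ← tsum_mul_left]
  refine tsum_congr fun n => ?_
  rw [hFval n, Gamma_add_nat' hz n]
  have hprod : (∏ i ∈ Finset.range n, (-z - (i:ℂ)))
      = (-1:ℂ) ^ n * ∏ i ∈ Finset.range n, (z + i) := by
    rw [show (∏ i ∈ Finset.range n, (-z - (i:ℂ)))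
        = ∏ i ∈ Finset.range n, ((-1) * (z + i)) from
      Finset.prod_congr rfl fun i _ => by ring]
    rw [Finset.prod_mul_distrib, Finset.prod_const, Finset.card_range]
  have hpow : s ^ (-z - (n:ℂ)) = s ^ (-(z + n)) := by
    rw [show -z - (n:ℂ) = -(z + n) by ring]
  rw [genBinom, hpow, hprod]
  have hfac : ((n.factorial : ℂ)) ≠ 0 := Nat.cast_ne_zero.mpr n.factorial_ne_zero
  push_cast
  field_simp
end

section
/- For fixed s ∈ ℂ with s ∉ ℝ_{≤0} and |s| > 1/ρ_f, the function z ↦ s^{(z,f)} := s^z · Σ_{n=0}^∞ C(z,n) P_{f,n} s^{−n} is an entire function of z. -/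
open scoped ENNReal NNReal

/-- let `P_n` be the P-numbers of `f` (i.e. the coefficients of
`p_f(t) = ((e^t−1)/t) f(t)`, related to the C-numbers `c` of `f` by
`(n+1) P_n = ∑_{k=0}^n (n+1 choose k) c_k`), and assume `∑ P_n s^n` has radius of
convergence `ρ_f > 0`.  For a fixed `s ∉ ℝ_{≤0}` with `|s| > 1/ρ_f`, the function
`z ↦ s^{(z,f)} = s^z ∑ C(z,n) P_n s^{−n}` is entire. -/
theorem statement16 (c P : ℕ → ℝ)
    (hPC : ∀ n : ℕ, ((n : ℝ) + 1) * P n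
      = ∑ k ∈ Finset.range (n + 1), ((n + 1).choose k : ℝ) * c k)
    (ρ : ℝ≥0∞) (hρ : 0 < ρ)
    (h1 : ∀ w : ℂ, (‖w‖₊ : ℝ≥0∞) < ρ → Summable (fun n : ℕ => (P n : ℂ) * w ^ n))
    (h2 : ∀ w : ℂ, ρ < (‖w‖₊ : ℝ≥0∞) → ¬ Summable (fun n : ℕ => (P n : ℂ) * w ^ n))
    (s : ℂ) (hs0 : ¬ (s.im = 0 ∧ s.re ≤ 0)) (hs : (ρ⁻¹).toReal < ‖s‖) :
    Differentiable ℂ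
      (fun z : ℂ => s ^ z * ∑' n : ℕ, genBinom z n * (P n : ℂ) * (s⁻¹) ^ n) := by
  have hs_ne : s ≠ 0 := by rintro rfl; exact hs0 ⟨rfl, le_refl 0⟩
  set q : ℝ := ‖s⁻¹‖ with hqdef
  have hq0 : 0 < q := norm_pos_iff.mpr (inv_ne_zero hs_ne)
  -- choose an intermediate radius r
  obtain ⟨r, hr0, hqr, hrρ⟩ : ∃ r : ℝ, 0 < r ∧ q < r ∧ (‖(r : ℂ)‖₊ : ℝ≥0∞) < ρ := by
    rcases eq_or_ne ρ ⊤ with h | h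
    · exact ⟨q + 1, by positivity, by linarith, by rw [h]; exact ENNReal.coe_lt_top⟩
    · have hρt : 0 < ρ.toReal := ENNReal.toReal_pos hρ.ne' h
      have hsabs : (ρ.toReal)⁻¹ < ‖s‖ := by
        rwa [ENNReal.toReal_inv] at hs
      have hq' : q < ρ.toReal := by
        have hspos : (0:ℝ) < ‖s‖ := norm_pos_iff.mpr hs_ne
        have : ‖s‖⁻¹ < ρ.toReal := by
          rw [inv_lt_comm₀ hspos hρt]
          exact hsabs
        simpa [hqdef, norm_inv] using this
      refine ⟨(q + ρ.toReal) / 2, by positivity, by linarith, ?_⟩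
      have hle : (0:ℝ) ≤ (q + ρ.toReal) / 2 := by positivity
      have : (‖(((q + ρ.toReal) / 2 : ℝ) : ℂ)‖₊ : ℝ≥0∞)
          = ENNReal.ofReal ((q + ρ.toReal) / 2) := by
        rw [← enorm_eq_nnnorm, ← ofReal_norm, Complex.norm_real, Real.norm_eq_abs,
          abs_of_nonneg hle]
      rw [this, ENNReal.ofReal_lt_iff_lt_toReal hle h]
      linarith
  -- bound on the coefficients
  have hsum := h1 (r : ℂ) hrρ
  obtain ⟨M, hM⟩ : ∃ M : ℝ, ∀ n, ‖P n‖ * r ^ n ≤ M := by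
    have ht : Filter.Tendsto (fun n : ℕ => ‖(P n : ℂ) * (r : ℂ) ^ n‖)
        Filter.atTop (nhds 0) := by
      simpa using hsum.tendsto_atTop_zero.norm
    obtain ⟨M, hM⟩ := ht.bddAbove_range
    refine ⟨M, fun n => ?_⟩
    have := hM (Set.mem_range_self n)
    simpa [norm_mul, norm_pow, Complex.norm_real, abs_of_pos hr0] using this
  set M1 : ℝ := max M 1 with hM1def
  have hM1pos : 0 < M1 := lt_of_lt_of_le one_pos (le_max_right _ _)
  have hM1 : ∀ n, ‖P n‖ * r ^ n ≤ M1 := fun n => (hM n).trans (le_max_left _ _)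
  set t : ℝ := q / r with htdef
  have ht0 : 0 < t := div_pos hq0 hr0
  have ht1 : t < 1 := (div_lt_one hr0).2 hqr
  -- the coefficient bound: ‖P n‖ * q ^ n ≤ M1 * t ^ n
  have hcoef : ∀ n, ‖P n‖ * q ^ n ≤ M1 * t ^ n := by
    intro n
    have hq_eq : q = r * t := by rw [htdef]; field_simp
    calc ‖P n‖ * q ^ n = (‖P n‖ * r ^ n) * t ^ n := by
          rw [hq_eq, mul_pow]; ring
      _ ≤ M1 * t ^ n := by
          have := hM1 n
          have h2 : (0:ℝ) ≤ t ^ n := le_of_lt (pow_pos ht0 n)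
          nlinarith
  -- differentiability of the tsum
  have hg : Differentiable ℂ (fun z : ℂ => ∑' n : ℕ, genBinom z n * (P n : ℂ) * (s⁻¹) ^ n) := by
    intro z₀
    set R : ℝ := ‖z₀‖ + 1 with hRdef
    have hR : 0 < R := by positivity
    set u : ℕ → ℝ := fun n => (∏ i ∈ Finset.range n, (R + i)) / n.factorial * (M1 * t ^ n)
      with hudef
    have hprod_pos : ∀ n, 0 < ∏ i ∈ Finset.range n, (R + (i:ℝ)) := by
      intro n
      apply Finset.prod_pos
      intro i _
      positivity
    have hu_pos : ∀ n, 0 < u n := by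
      intro n
      have := hprod_pos n
      have hf : (0:ℝ) < n.factorial := by positivity
      have := pow_pos ht0 n
      positivity
    have hu : Summable u := by
      apply summable_of_ratio_test_tendsto_lt_one ht1
        (Filter.Eventually.of_forall fun n => (hu_pos n).ne')
      have key : ∀ n : ℕ, ‖u (n + 1)‖ / ‖u n‖ = (R + n) / ((n:ℝ) + 1) * t := by
        intro n
        have h1 : ‖u (n+1)‖ = u (n+1) := abs_of_pos (hu_pos (n+1))
        have h2 : ‖u n‖ = u n := abs_of_pos (hu_pos n)
        rw [h1, h2, hudef]
        simp only [Finset.prod_range_succ, Nat.factorial_succ, pow_succ]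
        push_cast
        have hf : ((n.factorial : ℝ)) ≠ 0 := by positivity
        have hn1 : ((n:ℝ) + 1) ≠ 0 := by positivity
        have hp : (∏ i ∈ Finset.range n, (R + (i:ℝ))) ≠ 0 := (hprod_pos n).ne'
        field_simp
      simp only [key]
      have H : Filter.Tendsto (fun n : ℕ => (R + (n:ℝ)) / ((n:ℝ) + 1))
          Filter.atTop (nhds 1) := by
        have heq : ∀ n : ℕ, (R + (n:ℝ)) / ((n:ℝ) + 1) = (R - 1) / ((n:ℝ) + 1) + 1 := by
          intro n
          have hn1 : ((n:ℝ) + 1) ≠ 0 := by positivity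
          field_simp
          ring
        simp only [heq]
        have h0 : Filter.Tendsto (fun n : ℕ => (R - 1) / ((n:ℝ) + 1))
            Filter.atTop (nhds 0) :=
          Filter.Tendsto.div_atTop tendsto_const_nhds
            (Filter.tendsto_atTop_add_const_right _ _ tendsto_natCast_atTop_atTop)
        simpa using h0.add_const 1
      simpa using H.mul_const t
    have hF : DifferentiableOn ℂ
        (fun z : ℂ => ∑' n : ℕ, genBinom z n * (P n : ℂ) * (s⁻¹) ^ n) (Metric.ball 0 R) := by
      apply Complex.differentiableOn_tsum_of_summable_norm hu _ Metric.isOpen_ball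
      · intro n z hz
        have hz' : ‖z‖ < R := by simpa [Metric.mem_ball] using hz
        have hnorm : ‖genBinom z n * (P n : ℂ) * (s⁻¹) ^ n‖
            = (∏ i ∈ Finset.range n, ‖z - (i:ℂ)‖) / n.factorial * (‖P n‖ * q ^ n) := by
          simp [genBinom, norm_mul, norm_div, norm_pow, norm_prod, Complex.norm_real,
            Complex.norm_natCast, hqdef]
          ring
        rw [hnorm, hudef]
        have hprod_le : (∏ i ∈ Finset.range n, ‖z - (i:ℂ)‖)
            ≤ ∏ i ∈ Finset.range n, (R + (i:ℝ)) := by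
          apply Finset.prod_le_prod (fun i _ => norm_nonneg _)
          intro i _
          calc ‖z - (i:ℂ)‖ ≤ ‖z‖ + ‖(i:ℂ)‖ := norm_sub_le _ _
            _ ≤ R + i := by
                rw [Complex.norm_natCast]
                linarith
        have h1 : (0:ℝ) ≤ (∏ i ∈ Finset.range n, ‖z - (i:ℂ)‖) :=
          Finset.prod_nonneg fun i _ => norm_nonneg _
        have h2 : (0:ℝ) < (n.factorial : ℝ) := by positivity
        have h3 := hcoef n
        have h4 : (0:ℝ) ≤ ‖P n‖ * q ^ n := by positivity
        have h5 : (0:ℝ) ≤ (∏ i ∈ Finset.range n, (R + (i:ℝ))) / n.factorial := by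
          have := hprod_pos n
          positivity
        exact mul_le_mul (by gcongr) h3 h4 h5
      · intro n
        apply DifferentiableOn.mul
        apply DifferentiableOn.mul
        · apply Differentiable.differentiableOn
          apply Differentiable.div_const
          apply Differentiable.fun_finsetProd
          intro i _
          exact differentiable_id.sub_const _
        · exact differentiableOn_const _
        · exact differentiableOn_const _
    have hmem : z₀ ∈ Metric.ball (0:ℂ) R := by
      simp [Metric.mem_ball, hRdef]
    exact hF.differentiableAt (Metric.isOpen_ball.mem_nhds hmem)
  exact Differentiable.mul (fun z => (differentiableAt_id.const_cpow (Or.inl hs_ne))) hg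
end

section
/- The series L(z,f) = Σ_{n=n_f}^∞ n^{(−z,f)} converges absolutely and uniformly on compact subsets of the half-plane Re(z) > 1, and hence defines an analytic function there. -/
open scoped ENNReal NNReal Topology
open Filter

/-- `n_f = ⌊1/ρ⌋ + 1`. -/
noncomputable def nIdx (ρ : ℝ≥0∞) : ℕ := ⌊(ρ⁻¹).toReal⌋₊ + 1

/-- `n^{(−z,f)} = n^{−z} ∑_k C(−z,k) P_k n^{−k}`. -/
noncomputable def pTerm (P : ℕ → ℝ) (n : ℕ) (z : ℂ) : ℂ :=
  (n : ℂ) ^ (-z) * ∑' k : ℕ, genBinom (-z) k * (P k : ℂ) * ((n : ℂ)⁻¹) ^ k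

lemma st17_genBinom_norm_le (z : ℂ) (R : ℝ) (hz : ‖z‖ ≤ R) (k : ℕ) :
    ‖genBinom (-z) k‖ ≤ (∏ i ∈ Finset.range k, (R + i)) / (k.factorial : ℝ) := by
  have hR : 0 ≤ R := le_trans (norm_nonneg z) hz
  unfold genBinom
  rw [norm_div, Complex.norm_natCast]
  have hfac : (0:ℝ) < (k.factorial : ℝ) := by positivity
  rw [div_le_div_iff_of_pos_right hfac]
  rw [norm_prod]
  refine Finset.prod_le_prod (fun i _ => norm_nonneg _) fun i _ => ?_
  calc ‖-z - (i:ℂ)‖ = ‖z + (i:ℂ)‖ := by rw [show -z - (i:ℂ) = -(z + i) by ring, norm_neg]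
    _ ≤ ‖z‖ + ‖(i:ℂ)‖ := norm_add_le _ _
    _ ≤ R + (i:ℝ) := by rw [Complex.norm_natCast]; linarith

lemma st17_summable_B (R : ℝ) (hR : 0 ≤ R) (r : ℝ) (hr0 : 0 < r) (hr1 : r < 1) :
    Summable (fun k : ℕ => (∏ i ∈ Finset.range k, (R + (i:ℝ))) / (k.factorial : ℝ) * r ^ k) := by
  set a : ℕ → ℝ := fun k => (∏ i ∈ Finset.range k, (R + (i:ℝ))) / (k.factorial : ℝ) * r ^ k
    with ha_def
  have ha : ∀ k, 0 ≤ a k := by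
    intro k
    have : 0 ≤ ∏ i ∈ Finset.range k, (R + (i:ℝ)) :=
      Finset.prod_nonneg fun i _ => by positivity
    positivity
  apply summable_of_ratio_norm_eventually_le (r := (1 + r)/2) (by linarith)
  filter_upwards [eventually_ge_atTop ⌈(2*r*R)/(1-r)⌉₊] with k hk
  have hk' : (2*r*R)/(1-r) ≤ (k:ℝ) := Nat.ceil_le.mp hk
  rw [Real.norm_eq_abs, Real.norm_eq_abs, abs_of_nonneg (ha _), abs_of_nonneg (ha _)]
  have hfac : (0:ℝ) < (k.factorial : ℝ) := by positivity
  have hkp : (0:ℝ) < (k:ℝ) + 1 := by positivity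
  have heq : a (k+1) = a k * (r * (R + k) / ((k:ℝ)+1)) := by
    simp only [ha_def, Finset.prod_range_succ, Nat.factorial_succ, Nat.cast_mul, pow_succ,
      Nat.cast_add, Nat.cast_one]
    field_simp
  have key : r * (R + k) / ((k:ℝ)+1) ≤ (1+r)/2 := by
    rw [div_le_div_iff₀ hkp (by norm_num : (0:ℝ) < 2)]
    rw [div_le_iff₀ (by linarith : (0:ℝ) < 1 - r)] at hk'
    nlinarith
  rw [heq]
  calc a k * (r * (R + k) / ((k:ℝ)+1)) ≤ a k * ((1+r)/2) :=
        mul_le_mul_of_nonneg_left key (ha k)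
    _ = (1+r)/2 * a k := mul_comm _ _

lemma st17_diffOn_tsum {F : ℕ → ℂ → ℂ} {U : Set ℂ} (hU : IsOpen U)
    (hd : ∀ k, DifferentiableOn ℂ (F k) U)
    (hb : ∀ K, K ⊆ U → IsCompact K → ∃ u : ℕ → ℝ, Summable u ∧ ∀ k, ∀ z ∈ K, ‖F k z‖ ≤ u k) :
    DifferentiableOn ℂ (fun z => ∑' k, F k z) U := by
  have h : TendstoLocallyUniformlyOn (fun N z => ∑ k ∈ Finset.range N, F k z)
      (fun z => ∑' k, F k z) atTop U := by
    rw [tendstoLocallyUniformlyOn_iff_forall_isCompact hU]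
    intro K hKU hKc
    obtain ⟨u, hu, hub⟩ := hb K hKU hKc
    exact tendstoUniformlyOn_tsum_nat hu fun k z hz => hub k z hz
  exact h.differentiableOn
    (Eventually.of_forall fun N => DifferentiableOn.fun_sum fun k _ => hd k) hU

/-- the series `L(z,f) = ∑_{n ≥ n_f} n^{(−z,f)}` converges absolutely for
`Re z > 1`, converges uniformly on every compact subset of the half-plane `Re z > 1`,
and defines an analytic function there.  Here the `P_n` are the P-numbers of `f`
(related to the C-numbers `c` by `(n+1) P_n = ∑ (n+1 choose k) c_k`), with `∑ P_n s^n`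
of radius of convergence `ρ > 0`, and `n_f = ⌊1/ρ⌋ + 1`. -/
theorem statement17 (c P : ℕ → ℝ)
    (hPC : ∀ n : ℕ, ((n : ℝ) + 1) * P n
      = ∑ k ∈ Finset.range (n + 1), ((n + 1).choose k : ℝ) * c k)
    (ρ : ℝ≥0∞) (hρ : 0 < ρ)
    (h1 : ∀ w : ℂ, (‖w‖₊ : ℝ≥0∞) < ρ → Summable (fun n : ℕ => (P n : ℂ) * w ^ n))
    (h2 : ∀ w : ℂ, ρ < (‖w‖₊ : ℝ≥0∞) → ¬ Summable (fun n : ℕ => (P n : ℂ) * w ^ n)) :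
    (∀ z : ℂ, 1 < z.re → Summable (fun n : ℕ => ‖pTerm P (nIdx ρ + n) z‖)) ∧
    (∀ K : Set ℂ, K ⊆ {z : ℂ | 1 < z.re} → IsCompact K →
      TendstoUniformlyOn
        (fun (N : ℕ) (z : ℂ) => ∑ n ∈ Finset.range N, pTerm P (nIdx ρ + n) z)
        (fun z : ℂ => ∑' n : ℕ, pTerm P (nIdx ρ + n) z) atTop K) ∧
    AnalyticOn ℂ (fun z : ℂ => ∑' n : ℕ, pTerm P (nIdx ρ + n) z) {z : ℂ | 1 < z.re} := by
  clear hPC h2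
  have hUopen : IsOpen {z : ℂ | 1 < z.re} := isOpen_lt continuous_const Complex.continuous_re
  set nf : ℕ := nIdx ρ with hnfdef
  have hnf1 : 1 ≤ nf := Nat.le_add_left 1 _
  have hnfR : (1:ℝ) ≤ (nf:ℝ) := by exact_mod_cast hnf1
  -- 1/nf < ρ
  have hlt : ((nf : ℕ) : ℝ≥0∞)⁻¹ < ρ := by
    rw [ENNReal.inv_lt_iff_inv_lt]
    have htop : ρ⁻¹ ≠ ⊤ := by simp [hρ.ne']
    calc ρ⁻¹ = ENNReal.ofReal (ρ⁻¹).toReal := (ENNReal.ofReal_toReal htop).symm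
      _ < ((nf : ℕ) : ℝ≥0∞) := by
          rw [show ((nf : ℕ) : ℝ≥0∞) = ENNReal.ofReal (nf : ℝ) by
            simp [ENNReal.ofReal_natCast]]
          refine (ENNReal.ofReal_lt_ofReal_iff (by positivity)).mpr ?_
          rw [hnfdef]
          push_cast [nIdx]
          exact Nat.lt_floor_add_one _
  obtain ⟨b, hb1, hb2⟩ := exists_between hlt
  have hbtop : b ≠ ⊤ := hb2.ne_top
  have hb0 : 0 < b := lt_of_le_of_lt zero_le hb1
  set w : ℝ := b.toReal with hwdef
  have hw0 : 0 < w := ENNReal.toReal_pos hb0.ne' hbtop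
  have hwnf : ((nf:ℝ))⁻¹ < w := by
    have h := ENNReal.toReal_strict_mono hbtop hb1
    rw [ENNReal.toReal_inv] at h
    simpa using h
  have hsum : Summable (fun k : ℕ => (P k : ℂ) * (w:ℂ) ^ k) := by
    apply h1
    have : (‖(w:ℂ)‖₊ : ℝ≥0∞) = b := by
      rw [Complex.nnnorm_real, ← enorm_eq_nnnorm, Real.enorm_eq_ofReal hw0.le, hwdef,
        ENNReal.ofReal_toReal hbtop]
    rw [this]; exact hb2
  obtain ⟨M, hM⟩ := hsum.tendsto_atTop_zero.norm.bddAbove_range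
  have hM' : ∀ k, |P k| * w ^ k ≤ M := by
    intro k
    have h := hM (Set.mem_range_self k)
    simpa [norm_mul, norm_pow, Complex.norm_real, abs_of_nonneg hw0.le] using h
  have hM0 : 0 ≤ M := le_trans (by positivity) (hM' 0)
  set r : ℝ := ((nf:ℝ) * w)⁻¹ with hrdef
  have hnfw : 1 < (nf:ℝ) * w := by
    rw [inv_lt_iff_one_lt_mul₀ (by positivity)] at hwnf
    linarith [hwnf]
  have hr0 : 0 < r := by rw [hrdef]; positivity
  have hr1 : r < 1 := by rw [hrdef]; exact inv_lt_one_of_one_lt₀ hnfw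
  -- P decay for n ≥ nf
  have hP : ∀ n : ℕ, nf ≤ n → ∀ k : ℕ, |P k| * ((n:ℝ))⁻¹ ^ k ≤ M * r ^ k := by
    intro n hn k
    have hn0 : (0:ℝ) < (n:ℝ) := lt_of_lt_of_le (by linarith) (Nat.cast_le.mpr hn)
    have h1n : ((n:ℝ))⁻¹ ≤ w * r := by
      rw [hrdef, show w * ((nf:ℝ)*w)⁻¹ = ((nf:ℝ))⁻¹ by
        field_simp]
      exact inv_anti₀ (by linarith) (Nat.cast_le.mpr hn)
    calc |P k| * ((n:ℝ))⁻¹ ^ k ≤ |P k| * (w * r) ^ k :=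
          mul_le_mul_of_nonneg_left (pow_le_pow_left₀ (by positivity) h1n k) (abs_nonneg _)
      _ = (|P k| * w ^ k) * r ^ k := by rw [mul_pow]; ring
      _ ≤ M * r ^ k := mul_le_mul_of_nonneg_right (hM' k) (by positivity)
  -- term bound
  have hterm : ∀ R : ℝ, ∀ z : ℂ, ‖z‖ ≤ R → ∀ n : ℕ, nf ≤ n → ∀ k : ℕ,
      ‖genBinom (-z) k * (P k : ℂ) * ((n:ℂ)⁻¹) ^ k‖
        ≤ (∏ i ∈ Finset.range k, (R + (i:ℝ))) / (k.factorial : ℝ) * (M * r ^ k) := by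
    intro R z hz n hn k
    have hn0 : (0:ℝ) < (n:ℝ) :=
      lt_of_lt_of_le (by linarith) (Nat.cast_le.mpr hn)
    rw [norm_mul, norm_mul, norm_pow, norm_inv, Complex.norm_natCast, Complex.norm_real,
      mul_assoc]
    have h2 : |P k| * ((n:ℝ))⁻¹ ^ k ≤ M * r ^ k := hP n hn k
    have hBnn : (0:ℝ) ≤ (∏ i ∈ Finset.range k, (R + (i:ℝ))) / (k.factorial : ℝ) := by
      have hR : 0 ≤ R := le_trans (norm_nonneg z) hz
      have : 0 ≤ ∏ i ∈ Finset.range k, (R + (i:ℝ)) :=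
        Finset.prod_nonneg fun i _ => by positivity
      positivity
    exact mul_le_mul (st17_genBinom_norm_le z R hz k) h2 (by positivity) hBnn
  have hBsum : ∀ R : ℝ, 0 ≤ R → Summable (fun k : ℕ =>
      (∏ i ∈ Finset.range k, (R + (i:ℝ))) / (k.factorial : ℝ) * (M * r ^ k)) := by
    intro R hR
    refine ((st17_summable_B R hR r hr0 hr1).mul_left M).congr fun k => by ring
  -- inner sums summable in norm
  have hinner : ∀ z : ℂ, ∀ n : ℕ, nf ≤ n →
      Summable (fun k : ℕ => ‖genBinom (-z) k * (P k : ℂ) * ((n:ℂ)⁻¹) ^ k‖) := by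
    intro z n hn
    exact Summable.of_nonneg_of_le (fun k => norm_nonneg _)
      (fun k => hterm ‖z‖ z le_rfl n hn k) (hBsum ‖z‖ (norm_nonneg z))
  -- pTerm bound
  have hpt : ∀ R : ℝ, 0 ≤ R → ∃ S : ℝ, 0 ≤ S ∧ ∀ z : ℂ, ‖z‖ ≤ R → ∀ n : ℕ, nf ≤ n →
      ‖pTerm P n z‖ ≤ S * (n:ℝ) ^ (-z.re) := by
    intro R hR
    refine ⟨∑' k : ℕ, (∏ i ∈ Finset.range k, (R + (i:ℝ))) / (k.factorial : ℝ) * (M * r ^ k),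
      tsum_nonneg (fun k => by
        have : 0 ≤ ∏ i ∈ Finset.range k, (R + (i:ℝ)) :=
          Finset.prod_nonneg fun i _ => by positivity
        positivity), ?_⟩
    intro z hz n hn
    have hnpos : 0 < n := lt_of_lt_of_le hnf1 hn
    rw [pTerm, norm_mul, Complex.norm_natCast_cpow_of_pos hnpos]
    have hre : (-z).re = -z.re := by simp
    rw [hre, mul_comm]
    refine mul_le_mul_of_nonneg_right ?_ (Real.rpow_nonneg (Nat.cast_nonneg n) _)
    calc ‖∑' k : ℕ, genBinom (-z) k * (P k : ℂ) * ((n:ℂ)⁻¹) ^ k‖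
        ≤ ∑' k : ℕ, ‖genBinom (-z) k * (P k : ℂ) * ((n:ℂ)⁻¹) ^ k‖ :=
          norm_tsum_le_tsum_norm (hinner z n hn)
      _ ≤ ∑' k : ℕ, (∏ i ∈ Finset.range k, (R + (i:ℝ))) / (k.factorial : ℝ) * (M * r ^ k) :=
          Summable.tsum_le_tsum (fun k => hterm R z hz n hn k) (hinner z n hn) (hBsum R hR)
  -- summable majorant in n
  have hmaj : ∀ a : ℝ, 1 < a → Summable (fun n : ℕ => ((nf + n : ℕ) : ℝ) ^ (-a)) := by
    intro a ha
    have h := Real.summable_nat_rpow.mpr (by linarith : -a < -1)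
    have h2 := (summable_nat_add_iff (f := fun n : ℕ => ((n:ℕ):ℝ) ^ (-a)) nf).mpr h
    exact h2.congr fun n => by rw [add_comm]
  -- PART 1
  have part1 : ∀ z : ℂ, 1 < z.re → Summable (fun n : ℕ => ‖pTerm P (nf + n) z‖) := by
    intro z hz
    obtain ⟨S, hS0, hS⟩ := hpt ‖z‖ (norm_nonneg z)
    refine Summable.of_nonneg_of_le (fun n => norm_nonneg _) (fun n => ?_)
      ((hmaj z.re hz).mul_left S)
    exact hS z le_rfl (nf + n) (Nat.le_add_right _ _)
  -- PART 2
  have part2 : ∀ K : Set ℂ, K ⊆ {z : ℂ | 1 < z.re} → IsCompact K →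
      TendstoUniformlyOn
        (fun (N : ℕ) (z : ℂ) => ∑ n ∈ Finset.range N, pTerm P (nf + n) z)
        (fun z : ℂ => ∑' n : ℕ, pTerm P (nf + n) z) atTop K := by
    intro K hKU hKc
    rcases K.eq_empty_or_nonempty with rfl | hne
    · intro v _; simp
    obtain ⟨R0, hR0⟩ := hKc.isBounded.exists_norm_le
    obtain ⟨z₀, hz₀K, hz₀min⟩ := hKc.exists_isMinOn hne Complex.continuous_re.continuousOn
    have ha : 1 < z₀.re := hKU hz₀K
    obtain ⟨S, hS0, hS⟩ := hpt (max R0 0) (le_max_right _ _)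
    apply tendstoUniformlyOn_tsum_nat ((hmaj z₀.re ha).mul_left S)
    intro n z hzK
    calc ‖pTerm P (nf + n) z‖ ≤ S * ((nf + n : ℕ) : ℝ) ^ (-z.re) :=
          hS z (le_trans (hR0 z hzK) (le_max_left _ _)) _ (Nat.le_add_right _ _)
      _ ≤ S * ((nf + n : ℕ) : ℝ) ^ (-z₀.re) := by
          refine mul_le_mul_of_nonneg_left ?_ hS0
          refine Real.rpow_le_rpow_of_exponent_le ?_ (by
            have := isMinOn_iff.mp hz₀min z hzK
            linarith)
          exact_mod_cast Nat.one_le_iff_ne_zero.mpr (by omega)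
  -- PART 3
  have hFdiff : ∀ n : ℕ, nf ≤ n →
      DifferentiableOn ℂ (fun z => pTerm P n z) {z : ℂ | 1 < z.re} := by
    intro n hn
    have hn0 : ((n : ℕ) : ℂ) ≠ 0 := Nat.cast_ne_zero.mpr (by omega)
    apply DifferentiableOn.mul
    · exact (Differentiable.const_cpow (differentiable_id.neg) (Or.inl hn0)).differentiableOn
    · apply st17_diffOn_tsum hUopen
      · intro k
        have hprod : Differentiable ℂ (fun z : ℂ => ∏ i ∈ Finset.range k, (-z - (i:ℂ))) :=
          Differentiable.fun_finsetProd fun i _ => (differentiable_id.neg).sub_const _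
        have : Differentiable ℂ (fun z : ℂ => genBinom (-z) k * (P k : ℂ) * ((n:ℂ)⁻¹) ^ k) := by
          unfold genBinom
          exact ((hprod.div_const _).mul_const _).mul_const _
        exact this.differentiableOn
      · intro K hKU hKc
        obtain ⟨R0, hR0⟩ := hKc.isBounded.exists_norm_le
        refine ⟨_, hBsum (max R0 0) (le_max_right _ _), fun k z hz =>
          hterm (max R0 0) z (le_trans (hR0 z hz) (le_max_left _ _)) n hn k⟩
  have hloc : TendstoLocallyUniformlyOn
      (fun (N : ℕ) (z : ℂ) => ∑ n ∈ Finset.range N, pTerm P (nf + n) z)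
      (fun z : ℂ => ∑' n : ℕ, pTerm P (nf + n) z) atTop {z : ℂ | 1 < z.re} := by
    rw [tendstoLocallyUniformlyOn_iff_forall_isCompact hUopen]
    exact fun K hK hKc => part2 K hK hKc
  have hdiff : DifferentiableOn ℂ (fun z : ℂ => ∑' n : ℕ, pTerm P (nf + n) z)
      {z : ℂ | 1 < z.re} :=
    hloc.differentiableOn (Eventually.of_forall fun N =>
      DifferentiableOn.fun_sum fun n _ => hFdiff (nf + n) (Nat.le_add_right _ _)) hUopen
  exact ⟨part1, part2, hdiff.analyticOn hUopen⟩
end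

section
/- For Re(z) > 1, L(z,f) admits the integral representation L(z,f) = (1/Γ(z)) ∫_0^∞ t^{z−2} e^{(1−n_f)t} e^{−t} f(−t) dt. -/
open scoped ENNReal NNReal
open MeasureTheory

open MeasureTheory Set

namespace Stmt18


lemma gamma_shift (z : ℂ) (hz : 0 < z.re) (k : ℕ) :
    Complex.Gamma (z + k) = (∏ i ∈ Finset.range k, (z + i)) * Complex.Gamma z := by
  induction k with
  | zero => simp
  | succ k ih =>
    have hre : 0 < (z + (k : ℂ)).re := by
      rw [Complex.add_re, Complex.natCast_re]
      positivity
    have hzk : z + (k : ℂ) ≠ 0 := fun h => by rw [h] at hre; simp at hre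
    have h2 : (z + ((k + 1 : ℕ) : ℂ)) = (z + k) + 1 := by push_cast; ring
    rw [h2, Complex.Gamma_add_one _ hzk, ih, Finset.prod_range_succ]
    push_cast
    ring

lemma integrableOn_cpow_mul_exp {a : ℂ} (ha : 0 < a.re) {c : ℝ} (hc : 0 < c) :
    IntegrableOn (fun t : ℝ => (t : ℂ) ^ (a - 1) * Complex.exp (-(c * t))) (Ioi 0) := by
  have h := Complex.GammaIntegral_convergent ha
  rw [← mul_zero c, ← integrableOn_Ioi_comp_mul_left_iff _ _ hc] at h
  have hcne : ((c : ℂ)) ^ (a - 1) ≠ 0 := by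
    rw [Ne, Complex.cpow_eq_zero_iff, not_and_or]
    exact Or.inl (Complex.ofReal_ne_zero.mpr hc.ne')
  refine IntegrableOn.congr_fun (h.const_mul (((c : ℂ) ^ (a - 1))⁻¹)) (fun t ht => ?_) measurableSet_Ioi
  rw [mem_Ioi] at ht
  rw [Complex.ofReal_mul, Complex.mul_cpow_ofReal_nonneg hc.le ht.le]
  rw [Complex.ofReal_exp]
  push_cast
  field_simp

lemma integrableOn_rpow_mul_exp {a : ℝ} (ha : 0 < a) {c : ℝ} (hc : 0 < c) :
    IntegrableOn (fun t : ℝ => t ^ (a - 1) * Real.exp (-(c * t))) (Ioi 0) := by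
  have h := Real.GammaIntegral_convergent ha
  rw [← mul_zero c, ← integrableOn_Ioi_comp_mul_left_iff _ _ hc] at h
  have hcne : c ^ (a - 1) ≠ 0 := (Real.rpow_pos_of_pos hc _).ne'
  refine IntegrableOn.congr_fun (h.const_mul ((c ^ (a - 1))⁻¹)) (fun t ht => ?_) measurableSet_Ioi
  rw [mem_Ioi] at ht
  rw [Real.mul_rpow hc.le ht.le]
  field_simp

lemma series_bound {P : ℕ → ℝ} {C r : ℝ} (hr : 0 < r) (hC : ∀ k, |P k| ≤ C / r ^ k)
    {t : ℝ} (ht : 0 ≤ t) :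
    Summable (fun k : ℕ => |P k| / k.factorial * t ^ k) ∧
      ∑' k : ℕ, |P k| / k.factorial * t ^ k ≤ C * Real.exp (t / r) := by
  have hle : ∀ k : ℕ, |P k| / k.factorial * t ^ k ≤ C * ((t / r) ^ k / k.factorial) := by
    intro k
    have hfac : (0 : ℝ) < k.factorial := by positivity
    have h1 : |P k| * t ^ k ≤ C / r ^ k * t ^ k :=
      mul_le_mul_of_nonneg_right (hC k) (pow_nonneg ht k)
    have h2 : C * ((t / r) ^ k / k.factorial) = (C / r ^ k * t ^ k) / k.factorial := by
      rw [div_pow]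
      field_simp
    rw [h2]
    calc |P k| / k.factorial * t ^ k = (|P k| * t ^ k) / k.factorial := by ring
      _ ≤ (C / r ^ k * t ^ k) / k.factorial := by gcongr
  have hs : Summable (fun k : ℕ => C * ((t / r) ^ k / k.factorial)) :=
    (Real.summable_pow_div_factorial (t / r)).mul_left C
  have hnn : ∀ k : ℕ, 0 ≤ |P k| / k.factorial * t ^ k := fun k => by positivity
  have hsl : Summable (fun k : ℕ => |P k| / k.factorial * t ^ k) :=
    Summable.of_nonneg_of_le hnn hle hs
  refine ⟨hsl, (Summable.tsum_le_tsum hle hsl hs).trans_eq ?_⟩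
  rw [tsum_mul_left]
  congr 1
  rw [Real.exp_eq_exp_ℝ, NormedSpace.exp_eq_tsum_div]

lemma pfval_bound {P : ℕ → ℝ} {pfval : ℝ → ℝ}
    (hpf : ∀ t : ℝ, HasSum (fun n : ℕ => P n / n.factorial * t ^ n) (pfval t))
    {C r : ℝ} (hr : 0 < r) (hC : ∀ k, |P k| ≤ C / r ^ k)
    {t : ℝ} (ht : 0 ≤ t) : |pfval (-t)| ≤ C * Real.exp (t / r) := by
  obtain ⟨hs, hb⟩ := series_bound hr hC ht (P := P)
  have habs : ∀ k : ℕ, |P k / (k.factorial : ℝ) * (-t) ^ k| = |P k| / k.factorial * t ^ k := by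
    intro k
    rw [abs_mul, abs_div, abs_pow, abs_neg, abs_of_nonneg ht, Nat.abs_cast]
  have hs' : Summable fun k : ℕ => |P k / (k.factorial : ℝ) * (-t) ^ k| :=
    hs.congr fun k => (habs k).symm
  have key : ‖∑' k : ℕ, P k / (k.factorial : ℝ) * (-t) ^ k‖ ≤
      ∑' k : ℕ, ‖P k / (k.factorial : ℝ) * (-t) ^ k‖ :=
    norm_tsum_le_tsum_norm (by simpa only [Real.norm_eq_abs] using hs')
  simp only [Real.norm_eq_abs] at key
  calc |pfval (-t)| = |∑' k : ℕ, P k / k.factorial * (-t) ^ k| := by rw [(hpf (-t)).tsum_eq]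
    _ ≤ ∑' k : ℕ, |P k / (k.factorial : ℝ) * (-t) ^ k| := key
    _ = ∑' k : ℕ, |P k| / k.factorial * t ^ k := tsum_congr habs
    _ ≤ C * Real.exp (t / r) := hb

lemma exp_neg_bounds {t : ℝ} (ht : 0 < t) :
    Real.exp (-t) < 1 ∧ t / (1 + t) ≤ 1 - Real.exp (-t) := by
  constructor
  · rw [Real.exp_lt_one_iff]; linarith
  · have h1 : t + 1 ≤ Real.exp t := Real.add_one_le_exp t
    have h2 : Real.exp (-t) ≤ 1 / (1 + t) := by
      rw [Real.exp_neg, one_div]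
      exact inv_anti₀ (by linarith) (by linarith)
    have h3 : t / (1 + t) = 1 - 1 / (1 + t) := by
      field_simp
      ring

    linarith

lemma per_n (P : ℕ → ℝ) (pfval : ℝ → ℝ)
    (hpf : ∀ t : ℝ, HasSum (fun n : ℕ => P n / n.factorial * t ^ n) (pfval t))
    (z : ℂ) (hz : 1 < z.re) (r C : ℝ) (hr : 0 < r)
    (hC : ∀ k, |P k| ≤ C / r ^ k) (n : ℕ) (hn : 1 / r < n) :
    (Complex.Gamma z)⁻¹ *
        ∫ t in Ioi (0 : ℝ),
          (t : ℂ) ^ (z - 1) * Complex.exp (-(((n : ℝ) : ℂ) * t)) * ((pfval (-t) : ℝ) : ℂ)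
      = pTerm P n z := by
  have hn0 : (0 : ℝ) < n := lt_trans (div_pos one_pos hr) hn
  have hΓ : Complex.Gamma z ≠ 0 := by
    refine Complex.Gamma_ne_zero fun m => fun h => ?_
    rw [h] at hz
    simp only [Complex.neg_re, Complex.natCast_re] at hz
    have : (0 : ℝ) ≤ m := Nat.cast_nonneg m
    linarith
  set f : ℕ → ℝ → ℂ := fun k t =>
    ((t : ℂ) ^ (z - 1) * Complex.exp (-(((n : ℝ) : ℂ) * t))) *
      ((P k / k.factorial * (-t) ^ k : ℝ) : ℂ) with hfdef
  have hA : ∀ t : ℝ, HasSum (fun k => f k t)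
      (((t : ℂ) ^ (z - 1) * Complex.exp (-(((n : ℝ) : ℂ) * t))) * ((pfval (-t) : ℝ) : ℂ)) :=
    fun t => (Complex.hasSum_ofReal.mpr (hpf (-t))).mul_left _
  have hcont : ContinuousOn (fun t : ℝ => (t : ℂ) ^ (z - 1)) (Ioi 0) := fun t ht =>
    (Complex.continuousAt_ofReal_cpow_const t _ (Or.inr (ne_of_gt ht))).continuousWithinAt
  have hmexp : Continuous fun t : ℝ => Complex.exp (-(((n : ℝ) : ℂ) * t)) := by fun_prop
  have hmf : ∀ k, AEStronglyMeasurable (f k) (volume.restrict (Ioi 0)) := by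
    intro k
    refine ((hcont.aestronglyMeasurable measurableSet_Ioi).mul hmexp.aestronglyMeasurable).mul ?_
    exact (Complex.continuous_ofReal.comp (by fun_prop)).aestronglyMeasurable
  have hnorm : ∀ t : ℝ, 0 < t → ∀ k : ℕ,
      ‖f k t‖ = t ^ (z.re - 1) * Real.exp (-((n : ℝ) * t)) * (|P k| / k.factorial * t ^ k) := by
    intro t ht k
    have e1 : ‖(t : ℂ) ^ (z - 1)‖ = t ^ (z.re - 1) := by
      rw [Complex.norm_cpow_eq_rpow_re_of_pos ht]
      simp [Complex.sub_re]
    have e2 : ‖Complex.exp (-(((n : ℝ) : ℂ) * t))‖ = Real.exp (-((n : ℝ) * t)) := by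
      rw [show -(((n : ℝ) : ℂ) * t) = ((-((n : ℝ) * t) : ℝ) : ℂ) by push_cast; ring,
        Complex.norm_exp, Complex.ofReal_re]
    have e3 : ‖((P k / k.factorial * (-t) ^ k : ℝ) : ℂ)‖ = |P k| / k.factorial * t ^ k := by
      rw [Complex.norm_real, Real.norm_eq_abs, abs_mul, abs_div, abs_pow, abs_neg,
        abs_of_nonneg ht.le, Nat.abs_cast]
    simp only [hfdef, norm_mul, e1, e2, e3]
  have hsum_norm : ∀ t : ℝ, 0 < t → Summable (fun k => ‖f k t‖) ∧
      ∑' k, ‖f k t‖ ≤ C * (t ^ (z.re - 1) * Real.exp (-(((n : ℝ) - 1 / r) * t))) := by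
    intro t ht
    obtain ⟨hs, hb⟩ := series_bound hr hC ht.le (P := P)
    have hcongr : (fun k => ‖f k t‖) =
        fun k => (t ^ (z.re - 1) * Real.exp (-((n : ℝ) * t))) * (|P k| / k.factorial * t ^ k) :=
      funext fun k => by rw [hnorm t ht k]
    have hS : Summable fun k => ‖f k t‖ := by rw [hcongr]; exact hs.mul_left _
    refine ⟨hS, ?_⟩
    calc ∑' k, ‖f k t‖
        = (t ^ (z.re - 1) * Real.exp (-((n : ℝ) * t))) * ∑' k, (|P k| / k.factorial * t ^ k) := by
          rw [hcongr, tsum_mul_left]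
      _ ≤ (t ^ (z.re - 1) * Real.exp (-((n : ℝ) * t))) * (C * Real.exp (t / r)) :=
          mul_le_mul_of_nonneg_left hb (by positivity)
      _ = C * (t ^ (z.re - 1) * Real.exp (-(((n : ℝ) - 1 / r) * t))) := by
          rw [show -(((n : ℝ) - 1 / r) * t) = -((n : ℝ) * t) + t / r by ring, Real.exp_add]
          ring
  have hB : IntegrableOn
      (fun t : ℝ => C * (t ^ (z.re - 1) * Real.exp (-(((n : ℝ) - 1 / r) * t)))) (Ioi 0) := by
    have hc : (0 : ℝ) < (n : ℝ) - 1 / r := by linarith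
    exact (integrableOn_rpow_mul_exp (by linarith) hc).const_mul C
  have hlint : ∑' k, ∫⁻ t in Ioi (0 : ℝ), ‖f k t‖₊ ∂volume ≠ ⊤ := by
    rw [← lintegral_tsum fun k => (hmf k).nnnorm.aemeasurable.coe_nnreal_ennreal]
    have hbd : ∫⁻ t in Ioi (0 : ℝ), ∑' k, (‖f k t‖₊ : ℝ≥0∞) ≤
        ∫⁻ t in Ioi (0 : ℝ),
          ENNReal.ofReal (C * (t ^ (z.re - 1) * Real.exp (-(((n : ℝ) - 1 / r) * t)))) := by
      refine lintegral_mono_ae ((ae_restrict_iff' measurableSet_Ioi).mpr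
        (Filter.Eventually.of_forall fun t ht => ?_))
      rw [mem_Ioi] at ht
      obtain ⟨hS, hle⟩ := hsum_norm t ht
      calc ∑' k, (‖f k t‖₊ : ℝ≥0∞) = ENNReal.ofReal (∑' k, ‖f k t‖) := by
            rw [ENNReal.ofReal_tsum_of_nonneg (fun k => norm_nonneg _) hS]
            exact tsum_congr fun k => (ofReal_norm _).symm
        _ ≤ _ := ENNReal.ofReal_le_ofReal hle
    refine ne_of_lt (lt_of_le_of_lt hbd ?_)
    refine lt_of_le_of_lt (lintegral_mono fun t => ?_) hB.2
    rw [← ofReal_norm]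
    exact ENNReal.ofReal_le_ofReal (le_abs_self _)
  have hint := MeasureTheory.integral_tsum hmf hlint
  have hki : ∀ k : ℕ, (∫ t in Ioi (0 : ℝ), f k t) =
      ((P k : ℂ) / k.factorial * (-1) ^ k) *
        ((1 / ((n : ℝ) : ℂ)) ^ (z + k) * Complex.Gamma (z + k)) := by
    intro k
    have hre : 0 < (z + k).re := by
      rw [Complex.add_re, Complex.natCast_re]
      have : (0 : ℝ) ≤ k := Nat.cast_nonneg k
      linarith
    have step : ∀ t ∈ Ioi (0 : ℝ), f k t =
        ((P k : ℂ) / k.factorial * (-1) ^ k) *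
          ((t : ℂ) ^ ((z + k) - 1) * Complex.exp (-(((n : ℝ) : ℂ) * t))) := by
      intro t ht
      rw [mem_Ioi] at ht
      have ht0 : (t : ℂ) ≠ 0 := Complex.ofReal_ne_zero.mpr ht.ne'
      have hcp : (t : ℂ) ^ ((z + k) - 1) = (t : ℂ) ^ (z - 1) * ((t : ℂ)) ^ (k : ℕ) := by
        rw [← Complex.cpow_natCast, ← Complex.cpow_add _ _ ht0]
        congr 1
        ring
      rw [hcp]
      simp only [hfdef]
      push_cast
      ring
    rw [setIntegral_congr_fun measurableSet_Ioi step, integral_const_mul,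
      Complex.integral_cpow_mul_exp_neg_mul_Ioi hre hn0]
  have hterm : ∀ k : ℕ,
      (Complex.Gamma z)⁻¹ * (((P k : ℂ) / k.factorial * (-1) ^ k) *
          ((1 / ((n : ℝ) : ℂ)) ^ (z + k) * Complex.Gamma (z + k)))
        = (n : ℂ) ^ (-z) * (genBinom (-z) k * (P k : ℂ) * ((n : ℂ)⁻¹) ^ k) := by
    intro k
    have hncne : ((n : ℂ)) ≠ 0 := Nat.cast_ne_zero.mpr (by exact_mod_cast hn0.ne')
    have hargn : ((n : ℂ)).arg ≠ Real.pi := by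
      rw [Complex.natCast_arg]
      exact Real.pi_ne_zero.symm
    have hcast : ((n : ℝ) : ℂ) = (n : ℂ) := by push_cast; ring
    have hpow : (1 / ((n : ℝ) : ℂ)) ^ (z + k) = (n : ℂ) ^ (-z) * ((n : ℂ)⁻¹) ^ k := by
      rw [hcast, one_div, Complex.inv_cpow _ _ hargn, ← Complex.cpow_neg, neg_add,
        Complex.cpow_add _ _ hncne]
      congr 1
      rw [Complex.cpow_neg, Complex.cpow_natCast, ← inv_pow]
    have hprod : genBinom (-z) k =
        ((-1) ^ k * ∏ i ∈ Finset.range k, (z + i)) / (k.factorial : ℂ) := by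
      unfold genBinom
      congr 1
      calc ∏ i ∈ Finset.range k, (-z - (i : ℂ)) = ∏ i ∈ Finset.range k, (-1) * (z + i) :=
            Finset.prod_congr rfl fun i _ => by ring
        _ = (-1) ^ k * ∏ i ∈ Finset.range k, (z + (i : ℂ)) := by
            rw [Finset.prod_mul_distrib, Finset.prod_const, Finset.card_range]
    rw [hpow, gamma_shift z (by linarith) k, hprod]
    have hfac : ((k.factorial : ℂ)) ≠ 0 := Nat.cast_ne_zero.mpr k.factorial_ne_zero
    field_simp
  calc (Complex.Gamma z)⁻¹ * ∫ t in Ioi (0 : ℝ),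
        (t : ℂ) ^ (z - 1) * Complex.exp (-(((n : ℝ) : ℂ) * t)) * ((pfval (-t) : ℝ) : ℂ)
      = (Complex.Gamma z)⁻¹ * ∫ t in Ioi (0 : ℝ), ∑' k, f k t := by
        congr 1
        refine integral_congr_ae (Filter.Eventually.of_forall fun t => ?_)
        exact ((hA t).tsum_eq).symm
    _ = (Complex.Gamma z)⁻¹ * ∑' k, ∫ t in Ioi (0 : ℝ), f k t := by rw [hint]
    _ = ∑' k, (Complex.Gamma z)⁻¹ * ∫ t in Ioi (0 : ℝ), f k t := tsum_mul_left.symm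
    _ = ∑' k, (n : ℂ) ^ (-z) * (genBinom (-z) k * (P k : ℂ) * ((n : ℂ)⁻¹) ^ k) := by
        refine tsum_congr fun k => ?_
        rw [hki k, hterm k]
    _ = pTerm P n z := by rw [tsum_mul_left]; rfl


end Stmt18

open Stmt18 in
/-- for `Re z > 1`,
`L(z,f) = (1/Γ(z)) ∫_0^∞ t^{z−2} e^{(1−n_f)t} e^{−t} f(−t) dt`, where
`L(z,f) = ∑_{n ≥ n_f} n^{(−z,f)}`, `p_f(t) = ∑ P_n/n! t^n` is entire (with `∑ P_n s^n`
of radius of convergence `ρ > 0`, `n_f = ⌊1/ρ⌋ + 1`), and `f(t) = (t/(e^t−1)) p_f(t)`. -/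
theorem statement18 (P : ℕ → ℝ) (ρ : ℝ≥0∞) (hρ : 0 < ρ)
    (h1 : ∀ w : ℂ, (‖w‖₊ : ℝ≥0∞) < ρ → Summable (fun n : ℕ => (P n : ℂ) * w ^ n))
    (h2 : ∀ w : ℂ, ρ < (‖w‖₊ : ℝ≥0∞) → ¬ Summable (fun n : ℕ => (P n : ℂ) * w ^ n))
    (fval pfval : ℝ → ℝ)
    (hpf : ∀ t : ℝ, HasSum (fun n : ℕ => P n / n.factorial * t ^ n) (pfval t))
    (hf : ∀ t : ℝ, t ≠ 0 → fval t = t / (Real.exp t - 1) * pfval t)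
    (z : ℂ) (hz : 1 < z.re) :
    ∑' n : ℕ, pTerm P (nIdx ρ + n) z
      = (Complex.Gamma z)⁻¹ *
          ∫ t in Set.Ioi (0 : ℝ),
            (t : ℂ) ^ (z - 2) * Complex.exp ((1 - (nIdx ρ : ℂ)) * t) *
              ((Real.exp (-t) * fval (-t) : ℝ) : ℂ) := by
  set N := nIdx ρ with hNdef
  have hN1 : 1 ≤ N := Nat.le_add_left 1 _
  have hNR : (0 : ℝ) < N := by
    have : (1 : ℝ) ≤ N := by exact_mod_cast hN1
    linarith
  -- choose r with 1/N < r and (r : ℝ≥0∞) < ρ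
  have hfloor : ((ρ⁻¹).toReal) < (N : ℝ) := by
    rw [hNdef]
    push_cast [nIdx]
    exact Nat.lt_floor_add_one _
  have hinv_ne : ρ⁻¹ ≠ ⊤ := ENNReal.inv_ne_top.mpr hρ.ne'
  have h2' : ρ⁻¹ < (N : ℝ≥0∞) := by
    rw [← ENNReal.ofReal_toReal hinv_ne, ← ENNReal.ofReal_natCast]
    exact (ENNReal.ofReal_lt_ofReal_iff hNR).mpr hfloor
  have hNρ : ((N : ℝ≥0∞))⁻¹ < ρ := by
    have h := ENNReal.inv_lt_inv.mpr h2'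
    rwa [inv_inv] at h
  obtain ⟨u, hu1, hu2⟩ := exists_between hNρ
  have hNne : ((N : ℝ≥0∞))⁻¹ ≠ ⊤ := by
    rw [Ne, ENNReal.inv_eq_top]
    exact_mod_cast Nat.one_le_iff_ne_zero.mp hN1
  set u' := min u ((N : ℝ≥0∞)⁻¹ + 1) with hu'def
  have hu'1 : ((N : ℝ≥0∞))⁻¹ < u' := lt_min hu1 (ENNReal.lt_add_right hNne one_ne_zero)
  have hu'2 : u' < ρ := lt_of_le_of_lt (min_le_left _ _) hu2
  have hu'top : u' ≠ ⊤ := by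
    refine ne_top_of_le_ne_top ?_ (min_le_right _ _)
    exact ENNReal.add_ne_top.mpr ⟨hNne, ENNReal.one_ne_top⟩
  set r := u'.toReal with hrdef
  have hu'0 : u' ≠ 0 := by
    intro h
    rw [h] at hu'1
    simp at hu'1
  have hr0 : 0 < r := ENNReal.toReal_pos hu'0 hu'top
  have hrN : 1 / r < (N : ℝ) := by
    have h3 : ((N : ℝ≥0∞)⁻¹).toReal < r := ENNReal.toReal_strict_mono hu'top hu'1
    rw [ENNReal.toReal_inv] at h3
    have h4 : ((N : ℝ≥0∞)).toReal = (N : ℝ) := by simp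
    rw [h4] at h3
    rw [div_lt_iff₀ hr0]
    have h5 := mul_lt_mul_of_pos_left h3 hNR
    rwa [mul_inv_cancel₀ hNR.ne'] at h5
  have hrρ : ((‖((r : ℝ) : ℂ)‖₊ : ℝ≥0∞)) < ρ := by
    rw [Complex.nnnorm_real, ← enorm_eq_nnnorm, Real.enorm_eq_ofReal hr0.le, hrdef, ENNReal.ofReal_toReal hu'top]
    exact hu'2
  have hsumC := h1 ((r : ℝ) : ℂ) hrρ
  have hsabs : Summable (fun k : ℕ => |P k| * r ^ k) := by
    have hn := summable_norm_iff.mpr hsumC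
    refine hn.congr fun k => ?_
    rw [norm_mul, Complex.norm_real, Real.norm_eq_abs, norm_pow, Complex.norm_real,
      Real.norm_eq_abs, abs_of_pos hr0]
  set C := ∑' k : ℕ, |P k| * r ^ k with hCdef
  have hC : ∀ k, |P k| ≤ C / r ^ k := by
    intro k
    rw [le_div_iff₀ (pow_pos hr0 k)]
    exact Summable.le_tsum hsabs k fun j _ => by positivity
  -- the per-n formula
  set g : ℕ → ℝ → ℂ := fun m t =>
    (t : ℂ) ^ (z - 1) * Complex.exp (-((((N + m : ℕ) : ℝ) : ℂ) * t)) * ((pfval (-t) : ℝ) : ℂ)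
    with hgdef
  have hkey : ∀ m : ℕ, pTerm P (N + m) z =
      (Complex.Gamma z)⁻¹ * ∫ t in Ioi (0 : ℝ), g m t := by
    intro m
    refine (per_n P pfval hpf z hz r C hr0 hC (N + m) ?_).symm
    push_cast
    have : (0 : ℝ) ≤ m := Nat.cast_nonneg m
    linarith
  have hpfm : Measurable pfval := by
    have hms : ∀ i : ℕ, Measurable fun t : ℝ => ∑ k ∈ Finset.range i, P k / k.factorial * t ^ k :=
      fun i => by fun_prop
    exact measurable_of_tendsto_metrizable' Filter.atTop hms
      (tendsto_pi_nhds.mpr fun t => (hpf t).tendsto_sum_nat)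
  have hcont : ContinuousOn (fun t : ℝ => (t : ℂ) ^ (z - 1)) (Ioi 0) := fun t ht =>
    (Complex.continuousAt_ofReal_cpow_const t _ (Or.inr (ne_of_gt ht))).continuousWithinAt
  have hmg : ∀ m, AEStronglyMeasurable (g m) (volume.restrict (Ioi 0)) := by
    intro m
    refine ((hcont.aestronglyMeasurable measurableSet_Ioi).mul
      (Continuous.aestronglyMeasurable (by fun_prop))).mul ?_
    exact (Complex.measurable_ofReal.comp (hpfm.comp measurable_neg)).aestronglyMeasurable
  have hgeq : ∀ (m : ℕ) (t : ℝ), g m t =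
      ((t : ℂ) ^ (z - 1) * Complex.exp (-(((N : ℝ) : ℂ) * t)) * ((pfval (-t) : ℝ) : ℂ)) *
        (Complex.exp (-(t : ℂ))) ^ m := by
    intro m t
    simp only [hgdef]
    rw [show -((((N + m : ℕ) : ℝ) : ℂ) * t) = -(((N : ℝ) : ℂ) * t) + (m : ℂ) * (-(t : ℂ)) by
      push_cast; ring, Complex.exp_add, Complex.exp_nat_mul]
    ring
  have hq : ∀ t : ℝ, ‖Complex.exp (-(t : ℂ))‖ = Real.exp (-t) := fun t => by
    rw [show -(t : ℂ) = ((-t : ℝ) : ℂ) by push_cast; ring,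
      Complex.norm_exp, Complex.ofReal_re]
  have hgsum : ∀ t : ℝ, 0 < t → (∑' m, g m t) =
      ((t : ℂ) ^ (z - 1) * Complex.exp (-(((N : ℝ) : ℂ) * t)) * ((pfval (-t) : ℝ) : ℂ)) *
        (1 - Complex.exp (-(t : ℂ)))⁻¹ := by
    intro t ht
    have hlt : ‖Complex.exp (-(t : ℂ))‖ < 1 := by
      rw [hq t, Real.exp_lt_one_iff]
      linarith
    calc (∑' m, g m t) = ∑' m, ((t : ℂ) ^ (z - 1) * Complex.exp (-(((N : ℝ) : ℂ) * t)) *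
            ((pfval (-t) : ℝ) : ℂ)) * (Complex.exp (-(t : ℂ))) ^ m :=
          tsum_congr fun m => hgeq m t
      _ = _ := by rw [tsum_mul_left, tsum_geometric_of_norm_lt_one hlt]
  -- norm of g m t
  have hnormg : ∀ t : ℝ, 0 < t → ∀ m : ℕ, ‖g m t‖ =
      (t ^ (z.re - 1) * Real.exp (-((N : ℝ) * t)) * |pfval (-t)|) * Real.exp (-t) ^ m := by
    intro t ht m
    have e1 : ‖(t : ℂ) ^ (z - 1)‖ = t ^ (z.re - 1) := by
      rw [Complex.norm_cpow_eq_rpow_re_of_pos ht]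
      simp [Complex.sub_re]
    have e2 : ‖Complex.exp (-(((N : ℝ) : ℂ) * t))‖ = Real.exp (-((N : ℝ) * t)) := by
      rw [show -(((N : ℝ) : ℂ) * t) = ((-((N : ℝ) * t) : ℝ) : ℂ) by push_cast; ring,
        Complex.norm_exp, Complex.ofReal_re]
    rw [hgeq m t, norm_mul, norm_pow, hq t, norm_mul, norm_mul, e1, e2, Complex.norm_real,
      Real.norm_eq_abs]
  -- lintegral bound
  have hc0 : (0 : ℝ) < (N : ℝ) - 1 / r := by linarith
  have hBint : IntegrableOn (fun t : ℝ =>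
      C * (t ^ (z.re - 2) * Real.exp (-(((N : ℝ) - 1 / r) * t))) +
        C * (t ^ (z.re - 1) * Real.exp (-(((N : ℝ) - 1 / r) * t)))) (Ioi 0) := by
    have i1 : IntegrableOn (fun t : ℝ =>
        C * (t ^ ((z.re - 1) - 1) * Real.exp (-(((N : ℝ) - 1 / r) * t)))) (Ioi 0) :=
      (integrableOn_rpow_mul_exp (by linarith) hc0).const_mul C
    have i2 : IntegrableOn (fun t : ℝ =>
        C * (t ^ (z.re - 1) * Real.exp (-(((N : ℝ) - 1 / r) * t)))) (Ioi 0) :=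
      (integrableOn_rpow_mul_exp (a := z.re) (by linarith) hc0).const_mul C
    have : ((z.re - 1) - 1 : ℝ) = z.re - 2 := by ring
    rw [this] at i1
    exact i1.add i2
  have hlint : (∑' m, ∫⁻ t in Ioi (0 : ℝ), ‖g m t‖₊ ∂volume) ≠ ⊤ := by
    rw [← lintegral_tsum fun m => (hmg m).nnnorm.aemeasurable.coe_nnreal_ennreal]
    have hbd : (∫⁻ t in Ioi (0 : ℝ), ∑' m, (‖g m t‖₊ : ℝ≥0∞)) ≤
        ∫⁻ t in Ioi (0 : ℝ), ENNReal.ofReal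
          (C * (t ^ (z.re - 2) * Real.exp (-(((N : ℝ) - 1 / r) * t))) +
            C * (t ^ (z.re - 1) * Real.exp (-(((N : ℝ) - 1 / r) * t)))) := by
      refine lintegral_mono_ae ((ae_restrict_iff' measurableSet_Ioi).mpr
        (Filter.Eventually.of_forall fun t ht => ?_))
      rw [mem_Ioi] at ht
      obtain ⟨hq1, hq2⟩ := exp_neg_bounds ht
      have hq0 : (0 : ℝ) ≤ Real.exp (-t) := (Real.exp_pos _).le
      set D : ℝ := t ^ (z.re - 1) * Real.exp (-((N : ℝ) * t)) * |pfval (-t)| with hDdef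
      have hD0 : 0 ≤ D := by positivity
      have hSg : Summable fun m : ℕ => D * Real.exp (-t) ^ m :=
        (summable_geometric_of_lt_one hq0 hq1).mul_left D
      have hSn : Summable fun m : ℕ => ‖g m t‖ := by
        refine hSg.congr fun m => ?_
        rw [hnormg t ht m]
      have step1 : (∑' m, (‖g m t‖₊ : ℝ≥0∞)) = ENNReal.ofReal (D * (1 - Real.exp (-t))⁻¹) := by
        calc (∑' m, (‖g m t‖₊ : ℝ≥0∞)) = ∑' m, ENNReal.ofReal ‖g m t‖ :=
              tsum_congr fun m => (ofReal_norm _).symm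
          _ = ENNReal.ofReal (∑' m, ‖g m t‖) :=
              (ENNReal.ofReal_tsum_of_nonneg (fun m => norm_nonneg _) hSn).symm
          _ = ENNReal.ofReal (D * (1 - Real.exp (-t))⁻¹) := by
              congr 1
              calc (∑' m, ‖g m t‖) = ∑' m : ℕ, D * Real.exp (-t) ^ m :=
                    tsum_congr fun m => hnormg t ht m
                _ = D * (1 - Real.exp (-t))⁻¹ := by
                    rw [tsum_mul_left, tsum_geometric_of_lt_one hq0 hq1]
      rw [step1]
      refine ENNReal.ofReal_le_ofReal ?_
      -- D * (1 - q)⁻¹ ≤ bound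
      have hpb : |pfval (-t)| ≤ C * Real.exp (t / r) := pfval_bound hpf hr0 hC ht.le
      have h1q : (0 : ℝ) < 1 - Real.exp (-t) := by linarith
      have hfrac : (1 - Real.exp (-t))⁻¹ ≤ (1 + t) / t := by
        rw [← one_div, div_le_div_iff₀ h1q ht]
        have h6 := (div_le_iff₀ (show (0 : ℝ) < 1 + t by linarith)).mp hq2
        nlinarith [h6]
      have hD1 : D ≤ t ^ (z.re - 1) * Real.exp (-((N : ℝ) * t)) * (C * Real.exp (t / r)) := by
        rw [hDdef]
        have h0 : (0 : ℝ) ≤ t ^ (z.re - 1) * Real.exp (-((N : ℝ) * t)) := by positivity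
        exact mul_le_mul_of_nonneg_left hpb h0
      calc D * (1 - Real.exp (-t))⁻¹
          ≤ (t ^ (z.re - 1) * Real.exp (-((N : ℝ) * t)) * (C * Real.exp (t / r))) *
              ((1 + t) / t) := by
            exact mul_le_mul hD1 hfrac (inv_nonneg.mpr h1q.le) (hD0.trans hD1)
        _ = C * (t ^ (z.re - 2) * Real.exp (-(((N : ℝ) - 1 / r) * t))) +
            C * (t ^ (z.re - 1) * Real.exp (-(((N : ℝ) - 1 / r) * t))) := by
            have hsplit : t ^ (z.re - 2) = t ^ (z.re - 1) / t := by
              rw [show (z.re - 2 : ℝ) = (z.re - 1) - 1 by ring, Real.rpow_sub ht, Real.rpow_one]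
            have hexpc : Real.exp (-(((N : ℝ) - 1 / r) * t)) =
                Real.exp (-((N : ℝ) * t)) * Real.exp (t / r) := by
              rw [← Real.exp_add]
              congr 1
              ring
            rw [hsplit, hexpc]
            set T := t ^ (z.re - 1) with hT
            set E1 := Real.exp (-((N : ℝ) * t)) with hE1
            set F1 := Real.exp (t / r) with hF1
            field_simp
    refine ne_of_lt (lt_of_le_of_lt hbd ?_)
    refine lt_of_le_of_lt (lintegral_mono fun t => ?_) hBint.2
    rw [← ofReal_norm]
    exact ENNReal.ofReal_le_ofReal (le_abs_self _)
  have hint := MeasureTheory.integral_tsum hmg hlint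
  -- final congruence
  have hcongr2 : ∀ t ∈ Ioi (0 : ℝ), (∑' m, g m t) =
      (t : ℂ) ^ (z - 2) * Complex.exp ((1 - (N : ℂ)) * t) *
        ((Real.exp (-t) * fval (-t) : ℝ) : ℂ) := by
    intro t ht
    rw [mem_Ioi] at ht
    rw [hgsum t ht]
    have hq1 : Real.exp (-t) < 1 := (exp_neg_bounds ht).1
    have hfv : fval (-t) = (-t) / (Real.exp (-t) - 1) * pfval (-t) :=
      hf (-t) (neg_ne_zero.mpr ht.ne')
    have hE : ((Real.exp (-t) : ℝ) : ℂ) = Complex.exp (-(t : ℂ)) := by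
      rw [Complex.ofReal_exp]
      push_cast
      ring_nf
    have hden : (1 : ℂ) - Complex.exp (-(t : ℂ)) ≠ 0 := by
      rw [← hE, sub_ne_zero]
      exact_mod_cast (ne_of_gt hq1)
    have hden2 : Complex.exp (-(t : ℂ)) - 1 ≠ 0 := by
      rw [← hE, sub_ne_zero]
      exact_mod_cast (ne_of_lt hq1)
    have ht0 : (t : ℂ) ≠ 0 := Complex.ofReal_ne_zero.mpr ht.ne'
    have hcp : (t : ℂ) ^ (z - 1) = (t : ℂ) ^ (z - 2) * (t : ℂ) := by
      have h := Complex.cpow_add (z - 2) 1 ht0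
      rw [Complex.cpow_one] at h
      rw [show z - 1 = z - 2 + 1 by ring, h]
    have hexp1 : Complex.exp ((1 - (N : ℂ)) * t) =
        Complex.exp (t : ℂ) * Complex.exp (-(((N : ℝ) : ℂ) * t)) := by
      rw [← Complex.exp_add]
      congr 1
      push_cast
      ring
    have hexp2 : Complex.exp (t : ℂ) * Complex.exp (-(t : ℂ)) = 1 := by
      rw [← Complex.exp_add]
      simp
    rw [hfv, hcp, hexp1]
    push_cast
    have h3 : (-(t : ℂ)) / (Complex.exp (-(t : ℂ)) - 1) =
        (t : ℂ) * (1 - Complex.exp (-(t : ℂ)))⁻¹ := by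
      field_simp
      ring
    rw [h3]
    linear_combination (-((t : ℂ) ^ (z - 2) * (t : ℂ) * Complex.exp (-((N : ℂ) * (t : ℂ))) *
      ((pfval (-t) : ℝ) : ℂ) * (1 - Complex.exp (-(t : ℂ)))⁻¹)) * hexp2
  calc (∑' m, pTerm P (N + m) z)
      = ∑' m, (Complex.Gamma z)⁻¹ * ∫ t in Ioi (0 : ℝ), g m t := tsum_congr hkey
    _ = (Complex.Gamma z)⁻¹ * ∑' m, ∫ t in Ioi (0 : ℝ), g m t := tsum_mul_left
    _ = (Complex.Gamma z)⁻¹ * ∫ t in Ioi (0 : ℝ), ∑' m, g m t := by rw [hint]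
    _ = _ := by rw [setIntegral_congr_fun measurableSet_Ioi hcongr2]
end
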